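/- arXiv:2007.05139 — 4 statements merged into one kernel-verified Lean document; each statement's English description precedes it below -/
import Mathlib

section
/- Argmin-preservation lemma for Markov chains: suppose X_1,…,X_n forms a Markov chain, K = {1}, and Y is generated by the sequential privacy mechanism. Then for every i, every a ∈ 𝒳, every 1 ≤ j ≤ i−1, and every history y_{[j]} occurring with positive probability: if u* minimizes u ↦ P(X_i = a | X_1 = u, Y_{[j−1]} = y_{[j−1]}) over all u with positive conditional probability, then u* also minimizes u ↦ P(X_i = a | X_1 = u, Y_{[j]} = y_{[j]}). In particular, for every such i and a, min_u P(X_i = a | X_1 = u) is attained at a value u* that also attains min_u P(X_i = a | X_1 = u, Y_{[i−1]} = y_{[i−1]}) for every positive-probability history y_{[i−1]}. -/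
open Finset
open scoped Classical

noncomputable section

namespace GenotypeHiding

variable {X : Type} [Fintype X] [DecidableEq X]

/-- `y` agrees with the history `h` on all coordinates `j` with `j < t`
(i.e. the event `Y_{[t]} = h_{[t]}`, zero-based). -/
def agreeN {n : ℕ} (t : ℕ) (y h : Fin n → Option X) : Prop :=
  ∀ j : Fin n, (j : ℕ) < t → y j = h j

/-- `P(X = x, Y_{[t]} = h_{[t]})` under the joint law `J` of `(X, Y)`. -/
def prXH {n : ℕ} (J : (Fin n → X) → (Fin n → Option X) → ℝ) (t : ℕ)
    (x : Fin n → X) (h : Fin n → Option X) : ℝ :=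
  ∑ y : Fin n → Option X, if agreeN t y h then J x y else 0

/-- `P(Y_i = b, X = x, Y_{[t]} = h_{[t]})` under the joint law `J`. -/
def prXHY {n : ℕ} (J : (Fin n → X) → (Fin n → Option X) → ℝ) (t : ℕ)
    (x : Fin n → X) (h : Fin n → Option X) (i : Fin n) (b : Option X) : ℝ :=
  ∑ y : Fin n → Option X, if y i = b ∧ agreeN t y h then J x y else 0

/-- `P(Y_{[t]} = h_{[t]})` under the joint law `J`. -/
def prH {n : ℕ} (J : (Fin n → X) → (Fin n → Option X) → ℝ) (t : ℕ)
    (h : Fin n → Option X) : ℝ :=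
  ∑ x : Fin n → X, prXH J t x h

/-- `P(X_{i₀} = u, Y_{[t]} = h_{[t]})` under the joint law `J` (here `i₀` is the single
sensitive position). -/
def pr1H {n : ℕ} (J : (Fin n → X) → (Fin n → Option X) → ℝ) (i₀ : Fin n) (t : ℕ)
    (u : X) (h : Fin n → Option X) : ℝ :=
  ∑ x : Fin n → X, ∑ y : Fin n → Option X,
    if x i₀ = u ∧ agreeN t y h then J x y else 0

/-- `P(X_i = a, X_{i₀} = u, Y_{[t]} = h_{[t]})` under the joint law `J`. -/
def prI1H {n : ℕ} (J : (Fin n → X) → (Fin n → Option X) → ℝ) (i₀ : Fin n) (t : ℕ)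
    (i : Fin n) (a : X) (u : X) (h : Fin n → Option X) : ℝ :=
  ∑ x : Fin n → X, ∑ y : Fin n → Option X,
    if x i = a ∧ x i₀ = u ∧ agreeN t y h then J x y else 0

/-- `P(X_i = a | X_{i₀} = u, Y_{[t]} = h_{[t]})` under the joint law `J`. -/
def cond1 {n : ℕ} (J : (Fin n → X) → (Fin n → Option X) → ℝ) (i₀ : Fin n) (t : ℕ)
    (i : Fin n) (a : X) (u : X) (h : Fin n → Option X) : ℝ :=
  prI1H J i₀ t i a u h / pr1H J i₀ t u h

/-- `min_u P(X_i = a | X_{i₀} = u, Y_{[t]} = h_{[t]})`, the minimum being over all `u` with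
`P(X_{i₀} = u, Y_{[t]} = h_{[t]}) > 0`. -/
def minC1 {n : ℕ} (J : (Fin n → X) → (Fin n → Option X) → ℝ) (i₀ : Fin n) (t : ℕ)
    (i : Fin n) (a : X) (h : Fin n → Option X) : ℝ :=
  sInf {r : ℝ | ∃ u : X, 0 < pr1H J i₀ t u h ∧ r = cond1 J i₀ t i a u h}

/-- `J` is the joint law of `(X, Y)` where `Y` is generated from `X ∼ p` by the sequential
privacy mechanism with the single sensitive position `K = {i₀}`. -/
def IsSequentialMechanism1 {n : ℕ} (p : (Fin n → X) → ℝ) (i₀ : Fin n)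
    (J : (Fin n → X) → (Fin n → Option X) → ℝ) : Prop :=
  (∀ x y, 0 ≤ J x y) ∧
  (∀ x, ∑ y : Fin n → Option X, J x y = p x) ∧
  (∀ x y, 0 < J x y → ∀ i : Fin n, y i = some (x i) ∨ y i = none) ∧
  (∀ (i : Fin n) (x : Fin n → X) (h : Fin n → Option X), 0 < prXH J (i : ℕ) x h →
    prXHY J (i : ℕ) x h i (some (x i))
      = (minC1 J i₀ (i : ℕ) i (x i) h / cond1 J i₀ (i : ℕ) i (x i) (x i₀) h)
          * prXH J (i : ℕ) x h)

/-- `P(X_{[t]} = v_{[t]})`: the probability that the first `t` coordinates of `X` agree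
with `v`. -/
def prPre {n : ℕ} (p : (Fin n → X) → ℝ) (t : ℕ) (v : Fin n → X) : ℝ :=
  ∑ x : Fin n → X, if (∀ j : Fin n, (j : ℕ) < t → x j = v j) then p x else 0

/-- `P(X_i = a)`. -/
def prOne {n : ℕ} (p : (Fin n → X) → ℝ) (i : Fin n) (a : X) : ℝ :=
  ∑ x : Fin n → X, if x i = a then p x else 0

/-- `P(X_i = a ∧ X_{i'} = a')`. -/
def prTwo {n : ℕ} (p : (Fin n → X) → ℝ) (i i' : Fin n) (a a' : X) : ℝ :=
  ∑ x : Fin n → X, if x i = a ∧ x i' = a' then p x else 0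

/-- `X_1 → X_2 → ⋯ → X_n` is a Markov chain: for every `t`,
`P(X_{[t+2]}) ⋅ P(X_{t+1}) = P(X_{[t+1]}) ⋅ P(X_{t+1}, X_{t+2})` (zero-based indices),
which is the cross-multiplied form of the chain rule factorization. -/
def IsMarkov {n : ℕ} (p : (Fin n → X) → ℝ) : Prop :=
  ∀ (t : ℕ) (ht : t + 1 < n) (v : Fin n → X),
    prPre p (t + 2) v * prOne p ⟨t, by omega⟩ (v ⟨t, by omega⟩)
      = prPre p (t + 1) v
          * prTwo p ⟨t, by omega⟩ ⟨t + 1, ht⟩ (v ⟨t, by omega⟩) (v ⟨t + 1, ht⟩)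

set_option linter.unusedSectionVars false
section Proofs

variable {n : ℕ}

lemma agreeN_zero (y h : Fin n → Option X) : agreeN 0 y h :=
  fun _ hj => absurd hj (Nat.not_lt_zero _)

lemma agreeN_of_succ {t : ℕ} {y h : Fin n → Option X} (H : agreeN (t + 1) y h) :
    agreeN t y h := fun j hj => H j (Nat.lt_succ_of_lt hj)

lemma agreeN_succ_iff {t : ℕ} (ht : t < n) (y h : Fin n → Option X) :
    agreeN (t + 1) y h ↔ y ⟨t, ht⟩ = h ⟨t, ht⟩ ∧ agreeN t y h := by
  constructor
  · intro H
    exact ⟨H ⟨t, ht⟩ (Nat.lt_succ_self t), agreeN_of_succ H⟩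
  · rintro ⟨h1, h2⟩ j hj
    rcases Nat.lt_succ_iff_lt_or_eq.mp hj with hj' | hj'
    · exact h2 j hj'
    · have hje : j = ⟨t, ht⟩ := Fin.ext hj'
      rw [hje]; exact h1

lemma agreeN_big {t : ℕ} (ht : n ≤ t) (y h : Fin n → Option X) :
    agreeN (t + 1) y h ↔ agreeN t y h := by
  constructor
  · exact agreeN_of_succ
  · intro H j hj
    exact H j (lt_of_lt_of_le j.isLt ht)

variable (J : (Fin n → X) → (Fin n → Option X) → ℝ)

lemma prXH_nonneg (hJ0 : ∀ x y, 0 ≤ J x y) (t : ℕ) (x : Fin n → X) (h : Fin n → Option X) :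
    0 ≤ prXH J t x h :=
  Finset.sum_nonneg fun y _ => by split_ifs; exacts [hJ0 x y, le_rfl]

lemma prXHY_nonneg (hJ0 : ∀ x y, 0 ≤ J x y) (t : ℕ) (x : Fin n → X) (h : Fin n → Option X)
    (i : Fin n) (b : Option X) : 0 ≤ prXHY J t x h i b :=
  Finset.sum_nonneg fun y _ => by split_ifs; exacts [hJ0 x y, le_rfl]

lemma prXHY_le_prXH (hJ0 : ∀ x y, 0 ≤ J x y) (t : ℕ) (x : Fin n → X) (h : Fin n → Option X)
    (i : Fin n) (b : Option X) : prXHY J t x h i b ≤ prXH J t x h := by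
  refine Finset.sum_le_sum fun y _ => ?_
  split_ifs with h1 h2 h2
  · exact le_rfl
  · exact absurd h1.2 h2
  · exact hJ0 x y
  · exact le_rfl

lemma prXH_succ {t : ℕ} (ht : t < n) (x : Fin n → X) (h : Fin n → Option X) :
    prXH J (t + 1) x h = prXHY J t x h ⟨t, ht⟩ (h ⟨t, ht⟩) := by
  unfold prXH prXHY
  refine Finset.sum_congr rfl fun y _ => ?_
  simp only [agreeN_succ_iff ht]

lemma prXH_stable {t : ℕ} (ht : n ≤ t) (x : Fin n → X) (h : Fin n → Option X) :
    prXH J (t + 1) x h = prXH J t x h := by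
  unfold prXH
  refine Finset.sum_congr rfl fun y _ => ?_
  simp only [agreeN_big ht]

lemma prXHY_partition (t : ℕ) (x : Fin n → X) (h : Fin n → Option X) (i : Fin n) :
    ∑ b : Option X, prXHY J t x h i b = prXH J t x h := by
  unfold prXHY prXH
  rw [Finset.sum_comm]
  refine Finset.sum_congr rfl fun y _ => ?_
  simp only [ite_and]
  rw [Finset.sum_ite_eq]
  simp

lemma prXHY_some_ne (hJ0 : ∀ x y, 0 ≤ J x y)
    (hsupp : ∀ x y, 0 < J x y → ∀ i : Fin n, y i = some (x i) ∨ y i = none)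
    (t : ℕ) (x : Fin n → X) (h : Fin n → Option X) (i : Fin n) (b : X) (hb : b ≠ x i) :
    prXHY J t x h i (some b) = 0 := by
  unfold prXHY
  refine Finset.sum_eq_zero fun y _ => ?_
  split_ifs with hy
  · by_contra hne
    have hpos : 0 < J x y := lt_of_le_of_ne (hJ0 x y) (Ne.symm hne)
    rcases hsupp x y hpos i with h1 | h1
    · rw [hy.1] at h1; exact hb (Option.some_injective _ h1)
    · rw [hy.1] at h1; exact Option.some_ne_none _ h1
  · rfl

lemma prXHY_none_eq (hJ0 : ∀ x y, 0 ≤ J x y)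
    (hsupp : ∀ x y, 0 < J x y → ∀ i : Fin n, y i = some (x i) ∨ y i = none)
    (t : ℕ) (x : Fin n → X) (h : Fin n → Option X) (i : Fin n) :
    prXHY J t x h i none = prXH J t x h - prXHY J t x h i (some (x i)) := by
  have hpart := prXHY_partition J t x h i
  rw [Fintype.sum_option] at hpart
  have hsum : ∑ b : X, prXHY J t x h i (some b) = prXHY J t x h i (some (x i)) := by
    rw [Finset.sum_eq_single (x i)]
    · intro b _ hb
      exact prXHY_some_ne J hJ0 hsupp t x h i b hb
    · intro hmem; exact absurd (Finset.mem_univ _) hmem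
  rw [hsum] at hpart
  linarith

end Proofs
section Proofs2

variable {n : ℕ} (J : (Fin n → X) → (Fin n → Option X) → ℝ)

/-- Sum of `prXH` over `x` satisfying a predicate. -/
def prS (t : ℕ) (h : Fin n → Option X) (P : (Fin n → X) → Prop) : ℝ :=
  ∑ x : Fin n → X, if P x then prXH J t x h else 0

lemma prS_nonneg (hJ0 : ∀ x y, 0 ≤ J x y) (t : ℕ) (h : Fin n → Option X)
    (P : (Fin n → X) → Prop) : 0 ≤ prS J t h P :=
  Finset.sum_nonneg fun x _ => by
    split_ifs
    · exact prXH_nonneg J hJ0 t x h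
    · exact le_rfl

lemma prS_congr (t : ℕ) (h : Fin n → Option X) {P Q : (Fin n → X) → Prop}
    (hPQ : ∀ x, P x ↔ Q x) : prS J t h P = prS J t h Q :=
  Finset.sum_congr rfl fun x _ => by rw [if_congr (hPQ x) rfl rfl]

lemma prS_mono (hJ0 : ∀ x y, 0 ≤ J x y) (t : ℕ) (h : Fin n → Option X)
    {P Q : (Fin n → X) → Prop} (hPQ : ∀ x, P x → Q x) : prS J t h P ≤ prS J t h Q := by
  refine Finset.sum_le_sum fun x _ => ?_
  split_ifs with h1 h2 h2
  · exact le_rfl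
  · exact absurd (hPQ x h1) h2
  · exact prXH_nonneg J hJ0 t x h
  · exact le_rfl

lemma prS_eq_zero (hJ0 : ∀ x y, 0 ≤ J x y) {t : ℕ} {h : Fin n → Option X}
    {P Q : (Fin n → X) → Prop} (hPQ : ∀ x, P x → Q x) (hQ : prS J t h Q = 0) :
    prS J t h P = 0 :=
  le_antisymm (hQ ▸ prS_mono J hJ0 t h hPQ) (prS_nonneg J hJ0 t h P)

lemma prS_partition (t : ℕ) (h : Fin n → Option X) (k : Fin n) (P : (Fin n → X) → Prop) :
    prS J t h P = ∑ b : X, prS J t h (fun x => x k = b ∧ P x) := by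
  unfold prS
  rw [Finset.sum_comm]
  refine Finset.sum_congr rfl fun x _ => ?_
  by_cases hP : P x <;> simp [hP]

lemma pr1H_eq_prS (i₀ : Fin n) (t : ℕ) (u : X) (h : Fin n → Option X) :
    pr1H J i₀ t u h = prS J t h (fun x => x i₀ = u) := by
  unfold pr1H prS prXH
  refine Finset.sum_congr rfl fun x _ => ?_
  by_cases hx : x i₀ = u <;> simp [hx]

lemma prI1H_eq_prS (i₀ : Fin n) (t : ℕ) (i : Fin n) (a : X) (u : X) (h : Fin n → Option X) :
    prI1H J i₀ t i a u h = prS J t h (fun x => x i = a ∧ x i₀ = u) := by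
  unfold prI1H prS prXH
  refine Finset.sum_congr rfl fun x _ => ?_
  by_cases h1 : x i = a <;> by_cases h2 : x i₀ = u <;> simp [h1, h2]

lemma prH_eq_prS (t : ℕ) (h : Fin n → Option X) :
    prH J t h = prS J t h (fun _ => True) := by
  unfold prH prS
  simp

lemma prH_eq_sum_pr1H (i₀ : Fin n) (t : ℕ) (h : Fin n → Option X) :
    prH J t h = ∑ u : X, pr1H J i₀ t u h := by
  rw [prH_eq_prS]
  have : ∀ u : X, pr1H J i₀ t u h = prS J t h (fun x => x i₀ = u ∧ True) := by
    intro u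
    rw [pr1H_eq_prS]
    exact prS_congr J t h fun x => by simp
  simp only [this]
  exact prS_partition J t h i₀ _

lemma prH_succ_le (hJ0 : ∀ x y, 0 ≤ J x y) (t : ℕ) (h : Fin n → Option X) :
    prH J (t + 1) h ≤ prH J t h := by
  unfold prH prXH
  refine Finset.sum_le_sum fun x _ => Finset.sum_le_sum fun y _ => ?_
  split_ifs with h1 h2 h2
  · exact le_rfl
  · exact absurd (agreeN_of_succ h1) h2
  · exact hJ0 x y
  · exact le_rfl

lemma prH_mono (hJ0 : ∀ x y, 0 ≤ J x y) {t t' : ℕ} (htt : t ≤ t') (h : Fin n → Option X) :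
    prH J t' h ≤ prH J t h := by
  induction t' with
  | zero => rw [Nat.le_zero.mp htt]
  | succ s IH =>
    rcases Nat.le_succ_iff_eq_or_le.mp htt with he | hle
    · rw [he]
    · exact le_trans (prH_succ_le J hJ0 s h) (IH hle)

end Proofs2
section Proofs3

variable {n : ℕ}

/-- The per-step weight of the mechanism at step `t` given history `h`. -/
def wstep (J : (Fin n → X) → (Fin n → Option X) → ℝ) (i₀ : Fin n) (h : Fin n → Option X)
    (t : ℕ) (x : Fin n → X) : ℝ :=
  if ht : t < n then
    (h ⟨t, ht⟩).elim
      (1 - minC1 J i₀ t ⟨t, ht⟩ (x ⟨t, ht⟩) h / cond1 J i₀ t ⟨t, ht⟩ (x ⟨t, ht⟩) (x i₀) h)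
      (fun b => if x ⟨t, ht⟩ = b then
          minC1 J i₀ t ⟨t, ht⟩ b h / cond1 J i₀ t ⟨t, ht⟩ b (x i₀) h
        else 0)
  else 1

/-- Accumulated weight of the mechanism over the first `t` steps. -/
def Wfun (J : (Fin n → X) → (Fin n → Option X) → ℝ) (i₀ : Fin n) (h : Fin n → Option X) :
    ℕ → (Fin n → X) → ℝ
  | 0, _ => 1
  | t + 1, x => Wfun J i₀ h t x * wstep J i₀ h t x

lemma wstep_congr (J : (Fin n → X) → (Fin n → Option X) → ℝ) (i₀ : Fin n)
    (h : Fin n → Option X) (t : ℕ) (x x' : Fin n → X) (h0 : x i₀ = x' i₀)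
    (hagree : ∀ j : Fin n, (j : ℕ) < t + 1 → x j = x' j) :
    wstep J i₀ h t x = wstep J i₀ h t x' := by
  unfold wstep
  split_ifs with ht
  · have hx : x ⟨t, ht⟩ = x' ⟨t, ht⟩ := hagree ⟨t, ht⟩ (Nat.lt_succ_self t)
    rcases hh : h ⟨t, ht⟩ with _ | b <;> simp only [hx, h0]
  · rfl

lemma Wfun_congr (J : (Fin n → X) → (Fin n → Option X) → ℝ) (i₀ : Fin n)
    (h : Fin n → Option X) (t : ℕ) (x x' : Fin n → X) (h0 : x i₀ = x' i₀)
    (hagree : ∀ j : Fin n, (j : ℕ) < t → x j = x' j) :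
    Wfun J i₀ h t x = Wfun J i₀ h t x' := by
  induction t with
  | zero => rfl
  | succ s IH =>
    show Wfun J i₀ h s x * wstep J i₀ h s x = Wfun J i₀ h s x' * wstep J i₀ h s x'
    rw [IH (fun j hj => hagree j (Nat.lt_succ_of_lt hj)), wstep_congr J i₀ h s x x' h0 hagree]

lemma prXH_eq_W {p : (Fin n → X) → ℝ} {i₀ : Fin n}
    {J : (Fin n → X) → (Fin n → Option X) → ℝ} (hJ : IsSequentialMechanism1 p i₀ J)
    (h : Fin n → Option X) (t : ℕ) (x : Fin n → X) :
    prXH J t x h = p x * Wfun J i₀ h t x := by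
  obtain ⟨hJ0, hJp, hsupp, hmech⟩ := hJ
  induction t with
  | zero =>
    show prXH J 0 x h = p x * 1
    rw [mul_one, ← hJp x]
    unfold prXH
    exact Finset.sum_congr rfl fun y _ => if_pos (agreeN_zero y h)
  | succ s IH =>
    show prXH J (s + 1) x h = p x * (Wfun J i₀ h s x * wstep J i₀ h s x)
    rw [← mul_assoc, ← IH]
    unfold wstep
    split_ifs with hs
    · rw [prXH_succ J hs x h]
      by_cases hx0 : prXH J s x h = 0
      · have h1 : prXHY J s x h ⟨s, hs⟩ (h ⟨s, hs⟩) = 0 :=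
          le_antisymm (hx0 ▸ prXHY_le_prXH J hJ0 s x h _ _)
            (prXHY_nonneg J hJ0 s x h _ _)
        rw [h1, hx0, zero_mul]
      · have hpos : 0 < prXH J s x h :=
          lt_of_le_of_ne (prXH_nonneg J hJ0 s x h) (Ne.symm hx0)
        have hmech' := hmech ⟨s, hs⟩ x h hpos
        rcases hh : h ⟨s, hs⟩ with _ | b
        · -- none case
          rw [prXHY_none_eq J hJ0 hsupp s x h ⟨s, hs⟩]
          rw [hmech', Option.elim_none]
          ring
        · -- some b case
          by_cases hxb : x ⟨s, hs⟩ = b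
          · rw [Option.elim_some, if_pos hxb, ← hxb, hmech']
            ring
          · rw [prXHY_some_ne J hJ0 hsupp s x h ⟨s, hs⟩ b (fun hb => hxb hb.symm),
              Option.elim_some, if_neg hxb, mul_zero]
    · push_neg at hs
      rw [prXH_stable J hs x h, mul_one]

end Proofs3
section Proofs4

variable {n : ℕ}

/-- The set of `v` agreeing with a fixed `u` on coordinates `< s` is in bijection with
functions on the remaining coordinates. -/
def agreeEquiv (s : ℕ) (u : Fin n → X) :
    {v : Fin n → X // ∀ j : Fin n, (j : ℕ) < s → u j = v j} ≃
      ({j : Fin n // ¬ (j : ℕ) < s} → X) where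
  toFun v j := v.1 j.1
  invFun g := ⟨fun j => if hj : (j : ℕ) < s then u j else g ⟨j, hj⟩,
    fun j hj => by simp only [dif_pos hj]⟩
  left_inv v := by
    ext j
    by_cases hj : (j : ℕ) < s
    · simp only [dif_pos hj]
      exact v.2 j hj
    · simp only [dif_neg hj]
  right_inv g := by
    funext j
    simp only [dif_neg j.2]

lemma card_agree (s : ℕ) (u : Fin n → X) :
    (Finset.univ.filter (fun v : Fin n → X => ∀ j : Fin n, (j : ℕ) < s → u j = v j)).card
      = Fintype.card X ^ Fintype.card {j : Fin n // ¬ (j : ℕ) < s} := by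
  rw [← Fintype.card_subtype]
  rw [Fintype.card_congr (agreeEquiv s u)]
  exact Fintype.card_fun

lemma sum_indicator_agree (s : ℕ) (u : Fin n → X) (c : ℝ) :
    (∑ v : Fin n → X, if (∀ j : Fin n, (j : ℕ) < s → u j = v j) then c else 0)
      = (Fintype.card X ^ Fintype.card {j : Fin n // ¬ (j : ℕ) < s} : ℕ) * c := by
  rw [← Finset.sum_filter, Finset.sum_const, card_agree, nsmul_eq_mul]

/-- Key counting constant. -/
def Kc (n s : ℕ) : ℕ := Fintype.card X ^ Fintype.card {j : Fin n // ¬ (j : ℕ) < s}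

lemma Kc_pos (hX : 2 ≤ Fintype.card X) (s : ℕ) : 0 < (Kc (X := X) n s) :=
  by unfold Kc; exact Nat.pow_pos (by omega)

end Proofs4
section Proofs5

variable {n : ℕ}

lemma step_markov (p : (Fin n → X) → ℝ) (hX : 2 ≤ Fintype.card X) (hM : IsMarkov p)
    (s : ℕ) (hs : s + 1 < n)
    (w : (Fin n → X) → ℝ)
    (hw : ∀ x x', (∀ j : Fin n, (j : ℕ) < s + 1 → x j = x' j) → w x = w x')
    (m a : X) :
    (∑ x : Fin n → X, if x ⟨s, by omega⟩ = m ∧ x ⟨s + 1, hs⟩ = a then w x * p x else 0)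
        * prOne p ⟨s, by omega⟩ m
      = (∑ x : Fin n → X, if x ⟨s, by omega⟩ = m then w x * p x else 0)
          * prTwo p ⟨s, by omega⟩ ⟨s + 1, hs⟩ m a := by
  have hsn : s < n := by omega
  set S : Fin n := ⟨s, hsn⟩ with hS
  set S1 : Fin n := ⟨s + 1, hs⟩ with hS1
  set I : (Fin n → X) → ℝ := fun v => if v S = m ∧ v S1 = a then w v else 0 with hI
  have E1 : (∑ v : Fin n → X, I v * prPre p (s + 2) v) * prOne p S m
      = (∑ v : Fin n → X, I v * prPre p (s + 1) v) * prTwo p S S1 m a := by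
    rw [Finset.sum_mul, Finset.sum_mul]
    refine Finset.sum_congr rfl fun v _ => ?_
    by_cases hv : v S = m ∧ v S1 = a
    · have hMv := hM s hs v
      rw [show (⟨s, by omega⟩ : Fin n) = S from rfl, show (⟨s + 1, hs⟩ : Fin n) = S1 from rfl,
        hv.1, hv.2] at hMv
      rw [mul_assoc, mul_assoc, hMv]
    · simp only [hI, if_neg hv, zero_mul]
  have E2 : (∑ v : Fin n → X, I v * prPre p (s + 2) v)
      = ((Kc (X := X) n (s + 2) : ℕ) : ℝ)
          * ∑ x : Fin n → X, if x S = m ∧ x S1 = a then w x * p x else 0 := by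
    unfold prPre
    simp_rw [Finset.mul_sum]
    rw [Finset.sum_comm]
    refine Finset.sum_congr rfl fun x _ => ?_
    have key : ∀ v : Fin n → X,
        I v * (if (∀ j : Fin n, (j : ℕ) < s + 2 → x j = v j) then p x else 0)
          = (if (∀ j : Fin n, (j : ℕ) < s + 2 → x j = v j) then
              (if x S = m ∧ x S1 = a then w x * p x else 0) else 0) := by
      intro v
      by_cases hag : ∀ j : Fin n, (j : ℕ) < s + 2 → x j = v j
      · have e1 : v S = x S := (hag S (show s < s + 2 by omega)).symm
        have e2 : v S1 = x S1 := (hag S1 (show s + 1 < s + 2 by omega)).symm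
        have ew : w x = w v := hw x v (fun j hj => hag j (by omega))
        simp only [hI, if_pos hag, e1, e2, ← ew, ite_mul, zero_mul]
      · simp only [if_neg hag, mul_zero]
    simp_rw [key]
    rw [sum_indicator_agree (s + 2) x _]
    rfl
  have E3 : (∑ v : Fin n → X, I v * prPre p (s + 1) v)
      = ((Kc (X := X) n (s + 2) : ℕ) : ℝ)
          * ∑ x : Fin n → X, if x S = m then w x * p x else 0 := by
    unfold prPre
    simp_rw [Finset.mul_sum]
    rw [Finset.sum_comm]
    refine Finset.sum_congr rfl fun x _ => ?_
    have key : ∀ v : Fin n → X,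
        I v * (if (∀ j : Fin n, (j : ℕ) < s + 1 → x j = v j) then p x else 0)
          = (if (∀ j : Fin n, (j : ℕ) < s + 2 → (Function.update x S1 a) j = v j) then
              (if x S = m then w x * p x else 0) else 0) := by
      intro v
      have hiff : (∀ j : Fin n, (j : ℕ) < s + 2 → (Function.update x S1 a) j = v j)
          ↔ ((∀ j : Fin n, (j : ℕ) < s + 1 → x j = v j) ∧ v S1 = a) := by
        constructor
        · intro H
          constructor
          · intro j hj
            have hjne : j ≠ S1 := by
              intro hje
              rw [hje] at hj
              exact absurd hj (Nat.lt_irrefl (s + 1))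
            have := H j (by omega)
            rwa [Function.update_of_ne hjne] at this
          · have := H S1 (show s + 1 < s + 2 by omega)
            rw [Function.update_self] at this
            exact this.symm
        · rintro ⟨H1, H2⟩ j hj
          by_cases hje : j = S1
          · rw [hje, Function.update_self]
            exact H2.symm
          · have hjv : (j : ℕ) ≠ s + 1 := fun hc => hje (Fin.ext hc)
            rw [Function.update_of_ne hje]
            exact H1 j (by omega)
      rw [if_congr hiff rfl rfl]
      by_cases hA : ∀ j : Fin n, (j : ℕ) < s + 1 → x j = v j
      · have exS : v S = x S := (hA S (show s < s + 1 by omega)).symm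
        have ew : w x = w v := hw x v hA
        by_cases hva : v S1 = a
        · rw [if_pos hA, if_pos ⟨hA, hva⟩]
          simp only [hI, exS, hva, and_true, ← ew, ite_mul, zero_mul]
        · rw [if_neg (fun hc : (∀ j : Fin n, (j : ℕ) < s + 1 → x j = v j) ∧ v S1 = a => hva hc.2)]
          simp only [hI, hva, and_false, if_false, zero_mul]
      · rw [if_neg hA,
          if_neg (fun hc : (∀ j : Fin n, (j : ℕ) < s + 1 → x j = v j) ∧ v S1 = a => hA hc.1),
          mul_zero]
    simp_rw [key]
    rw [sum_indicator_agree (s + 2) (Function.update x S1 a) _]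
    rfl
  have hKne : ((Kc (X := X) n (s + 2) : ℕ) : ℝ) ≠ 0 := by
    have hKpos : (0 : ℝ) < ((Kc (X := X) n (s + 2) : ℕ) : ℝ) := by
      exact_mod_cast Kc_pos hX (s + 2)
    exact ne_of_gt hKpos
  rw [E2, E3] at E1
  rw [mul_assoc, mul_assoc] at E1
  exact mul_left_cancel₀ hKne E1

end Proofs5
section Proofs6

variable {n : ℕ}

lemma sum_partition_coord (k : Fin n) (F : (Fin n → X) → ℝ) :
    ∑ x : Fin n → X, F x = ∑ m : X, ∑ x : Fin n → X, if x k = m then F x else 0 := by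
  rw [Finset.sum_comm]
  refine Finset.sum_congr rfl fun x _ => ?_
  rw [Finset.sum_ite_eq]
  simp

lemma prOne_zero_imp (p : (Fin n → X) → ℝ) (hp0 : ∀ x, 0 ≤ p x) (k : Fin n) (m : X)
    (hz : prOne p k m = 0) : ∀ x : Fin n → X, x k = m → p x = 0 := by
  intro x hx
  have h0 : ∀ y ∈ (Finset.univ : Finset (Fin n → X)),
      (0:ℝ) ≤ if y k = m then p y else 0 := by
    intro y _; split_ifs; exacts [hp0 y, le_rfl]
  have := (Finset.sum_eq_zero_iff_of_nonneg h0).mp hz x (Finset.mem_univ x)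
  rwa [if_pos hx] at this

lemma markov_CI (p : (Fin n → X) → ℝ) (hp0 : ∀ x, 0 ≤ p x) (hX : 2 ≤ Fintype.card X)
    (hM : IsMarkov p) (t : ℕ)
    (w : (Fin n → X) → ℝ)
    (hw : ∀ x x', (∀ j : Fin n, (j : ℕ) < t + 1 → x j = x' j) → w x = w x')
    (b : X) :
    ∀ (i : ℕ) (hle2 : t + 1 ≤ i) (hi : i < n) (a : X),
    (∑ x : Fin n → X, if x ⟨t, by omega⟩ = b ∧ x ⟨i, hi⟩ = a then w x * p x else 0)
        * prOne p ⟨t, by omega⟩ b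
      = (∑ x : Fin n → X, if x ⟨t, by omega⟩ = b then w x * p x else 0)
          * prTwo p ⟨t, by omega⟩ ⟨i, hi⟩ b a := by
  intro i hle
  induction i, hle using Nat.le_induction with
  | base =>
    intro hi a
    exact step_markov p hX hM t hi w hw b a
  | succ i hle IH =>
    intro hi1 a
    have hi : i < n := by omega
    have htn : t < n := by omega
    set S : Fin n := ⟨t, htn⟩ with hS
    set I : Fin n := ⟨i, hi⟩ with hIdef
    set I1 : Fin n := ⟨i + 1, hi1⟩ with hI1
    -- abbreviations
    set T3 : X → ℝ := fun m =>
      ∑ x : Fin n → X, if x S = b ∧ x I = m ∧ x I1 = a then w x * p x else 0 with hT3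
    set P3 : X → ℝ := fun m =>
      ∑ x : Fin n → X, if x S = b ∧ x I = m ∧ x I1 = a then p x else 0 with hP3
    set T2 : X → ℝ := fun m =>
      ∑ x : Fin n → X, if x S = b ∧ x I = m then w x * p x else 0 with hT2
    set Wb : ℝ := ∑ x : Fin n → X, if x S = b then w x * p x else 0 with hWb
    have hA : ∀ m : X, T3 m * prOne p I m = T2 m * prTwo p I I1 m a := by
      intro m
      have hw' : ∀ x x' : Fin n → X, (∀ j : Fin n, (j : ℕ) < i + 1 → x j = x' j) →
          (if x S = b then w x else 0) = (if x' S = b then w x' else 0) := by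
        intro x x' hag
        have e1 : x S = x' S := hag S (show t < i + 1 by omega)
        have e2 : w x = w x' := hw x x' (fun j hj => hag j (by omega))
        rw [e1, e2]
      have := step_markov p hX hM i hi1 (fun x => if x S = b then w x else 0) hw' m a
      have el : (∑ x : Fin n → X,
          if x ⟨i, by omega⟩ = m ∧ x ⟨i + 1, hi1⟩ = a then
            (if x S = b then w x else 0) * p x else 0) = T3 m := by
        refine Finset.sum_congr rfl fun x _ => ?_
        simp only [← hIdef, ← hI1]
        by_cases h1 : x S = b <;> by_cases h2 : x I = m <;> by_cases h3 : x I1 = a <;>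
          simp [h1, h2, h3]
      have er : (∑ x : Fin n → X,
          if x ⟨i, by omega⟩ = m then (if x S = b then w x else 0) * p x else 0) = T2 m := by
        refine Finset.sum_congr rfl fun x _ => ?_
        simp only [← hIdef]
        by_cases h1 : x S = b <;> by_cases h2 : x I = m <;> simp [h1, h2]
      rw [el, er] at this
      exact this
    have hB : ∀ m : X, P3 m * prOne p I m = prTwo p S I b m * prTwo p I I1 m a := by
      intro m
      have hw' : ∀ x x' : Fin n → X, (∀ j : Fin n, (j : ℕ) < i + 1 → x j = x' j) →
          (if x S = b then (1:ℝ) else 0) = (if x' S = b then 1 else 0) := by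
        intro x x' hag
        rw [hag S (show t < i + 1 by omega)]
      have := step_markov p hX hM i hi1 (fun x => if x S = b then (1:ℝ) else 0) hw' m a
      have el : (∑ x : Fin n → X,
          if x ⟨i, by omega⟩ = m ∧ x ⟨i + 1, hi1⟩ = a then
            (if x S = b then (1:ℝ) else 0) * p x else 0) = P3 m := by
        refine Finset.sum_congr rfl fun x _ => ?_
        simp only [← hIdef, ← hI1]
        by_cases h1 : x S = b <;> by_cases h2 : x I = m <;> by_cases h3 : x I1 = a <;>
          simp [h1, h2, h3]
      have er : (∑ x : Fin n → X,
          if x ⟨i, by omega⟩ = m then (if x S = b then (1:ℝ) else 0) * p x else 0)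
          = prTwo p S I b m := by
        unfold prTwo
        refine Finset.sum_congr rfl fun x _ => ?_
        simp only [← hIdef]
        by_cases h1 : x S = b <;> by_cases h2 : x I = m <;> simp [h1, h2]
      rw [el, er] at this
      exact this
    have hIH : ∀ m : X, T2 m * prOne p S b = Wb * prTwo p S I b m := by
      intro m
      exact IH hi m
    -- partition the goal sums over the value of x I
    have egl : (∑ x : Fin n → X, if x S = b ∧ x I1 = a then w x * p x else 0)
        = ∑ m : X, T3 m := by
      rw [sum_partition_coord I (fun x => if x S = b ∧ x I1 = a then w x * p x else 0)]
      refine Finset.sum_congr rfl fun m _ => Finset.sum_congr rfl fun x _ => ?_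
      by_cases h1 : x S = b <;> by_cases h2 : x I = m <;> by_cases h3 : x I1 = a <;>
        simp [h1, h2, h3]
    have egr : prTwo p S I1 b a = ∑ m : X, P3 m := by
      unfold prTwo
      rw [sum_partition_coord I (fun x => if x S = b ∧ x I1 = a then p x else 0)]
      refine Finset.sum_congr rfl fun m _ => Finset.sum_congr rfl fun x _ => ?_
      by_cases h1 : x S = b <;> by_cases h2 : x I = m <;> by_cases h3 : x I1 = a <;>
        simp [h1, h2, h3]
    rw [egl, egr, Finset.sum_mul, Finset.mul_sum]
    refine Finset.sum_congr rfl fun m _ => ?_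
    by_cases hm : prOne p I m = 0
    · have hz := prOne_zero_imp p hp0 I m hm
      have hT3z : T3 m = 0 := by
        rw [hT3]
        refine Finset.sum_eq_zero fun x _ => ?_
        split_ifs with hc
        · rw [hz x hc.2.1, mul_zero]
        · rfl
      have hP3z : P3 m = 0 := by
        rw [hP3]
        refine Finset.sum_eq_zero fun x _ => ?_
        split_ifs with hc
        · exact hz x hc.2.1
        · rfl
      rw [hT3z, hP3z, zero_mul, mul_zero]
    · have key : (T3 m * prOne p S b) * prOne p I m = (Wb * P3 m) * prOne p I m := by
        calc (T3 m * prOne p S b) * prOne p I m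
            = (T3 m * prOne p I m) * prOne p S b := by ring
          _ = (T2 m * prTwo p I I1 m a) * prOne p S b := by rw [hA m]
          _ = (T2 m * prOne p S b) * prTwo p I I1 m a := by ring
          _ = (Wb * prTwo p S I b m) * prTwo p I I1 m a := by rw [hIH m]
          _ = Wb * (prTwo p S I b m * prTwo p I I1 m a) := by ring
          _ = Wb * (P3 m * prOne p I m) := by rw [hB m]
          _ = (Wb * P3 m) * prOne p I m := by ring
      exact mul_right_cancel₀ hm key
end Proofs6
section Proofs7

variable {n : ℕ}

lemma prOne_nonneg (p : (Fin n → X) → ℝ) (hp0 : ∀ x, 0 ≤ p x) (k : Fin n) (m : X) :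
    0 ≤ prOne p k m :=
  Finset.sum_nonneg fun x _ => by split_ifs; exacts [hp0 x, le_rfl]

lemma q_factor (hn : 1 ≤ n) (p : (Fin n → X) → ℝ) (hp0 : ∀ x, 0 ≤ p x)
    (hX : 2 ≤ Fintype.card X) (hM : IsMarkov p)
    (J : (Fin n → X) → (Fin n → Option X) → ℝ) (hJ : IsSequentialMechanism1 p ⟨0, hn⟩ J)
    (t : ℕ) (i : Fin n) (hti : t < (i : ℕ)) (h : Fin n → Option X) (a : X)
    (u b : X) :
    prS J t h (fun x => x i = a ∧ x ⟨t, lt_trans hti i.isLt⟩ = b ∧ x ⟨0, hn⟩ = u)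
      = (if 0 < prOne p ⟨t, lt_trans hti i.isLt⟩ b then
          prTwo p ⟨t, lt_trans hti i.isLt⟩ i b a / prOne p ⟨t, lt_trans hti i.isLt⟩ b
        else 0)
        * prS J t h (fun x => x ⟨t, lt_trans hti i.isLt⟩ = b ∧ x ⟨0, hn⟩ = u) := by
  have htn : t < n := lt_trans hti i.isLt
  set i₀ : Fin n := ⟨0, hn⟩ with hi₀
  set T : Fin n := ⟨t, htn⟩ with hT
  have hW := prXH_eq_W hJ h t
  set w₀ : (Fin n → X) → ℝ := fun x => if x i₀ = u then Wfun J i₀ h t x else 0 with hw₀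
  have hwdep : ∀ x x', (∀ j : Fin n, (j : ℕ) < t + 1 → x j = x' j) → w₀ x = w₀ x' := by
    intro x x' hag
    have e0 : x i₀ = x' i₀ := hag i₀ (by simp only [hi₀]; omega)
    have eW : Wfun J i₀ h t x = Wfun J i₀ h t x' :=
      Wfun_congr J i₀ h t x x' e0 (fun j hj => hag j (by omega))
    simp only [hw₀, e0, eW]
  have hCI := markov_CI p hp0 hX hM t w₀ hwdep b (i : ℕ) hti i.isLt a
  have eL : (∑ x : Fin n → X, if x ⟨t, by omega⟩ = b ∧ x ⟨(i : ℕ), i.isLt⟩ = a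
        then w₀ x * p x else 0)
      = prS J t h (fun x => x i = a ∧ x T = b ∧ x i₀ = u) := by
    unfold prS
    refine Finset.sum_congr rfl fun x _ => ?_
    rw [hW x]
    have hie : (⟨(i : ℕ), i.isLt⟩ : Fin n) = i := Fin.eta i i.isLt
    rw [hie]
    simp only [← hT]
    by_cases h1 : x T = b <;> by_cases h2 : x i = a <;> by_cases h3 : x i₀ = u <;>
      simp [hw₀, h1, h2, h3, mul_comm]
  have eR : (∑ x : Fin n → X, if x ⟨t, by omega⟩ = b then w₀ x * p x else 0)
      = prS J t h (fun x => x T = b ∧ x i₀ = u) := by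
    unfold prS
    refine Finset.sum_congr rfl fun x _ => ?_
    rw [hW x]
    simp only [← hT]
    by_cases h1 : x T = b <;> by_cases h3 : x i₀ = u <;>
      simp [hw₀, h1, h3, mul_comm]
  rw [eL, eR] at hCI
  have hie2 : (⟨(i : ℕ), i.isLt⟩ : Fin n) = i := Fin.eta i i.isLt
  rw [hie2] at hCI
  by_cases hb : prOne p T b = 0
  · have hz := prOne_zero_imp p hp0 T b hb
    have hL : prS J t h (fun x => x i = a ∧ x T = b ∧ x i₀ = u) = 0 := by
      unfold prS
      refine Finset.sum_eq_zero fun x _ => ?_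
      split_ifs with hc
      · rw [hW x, hz x hc.2.1, zero_mul]
      · rfl
    rw [hL, if_neg (by rw [hb]; exact lt_irrefl 0), zero_mul]
  · have hbpos : 0 < prOne p T b :=
      lt_of_le_of_ne (prOne_nonneg p hp0 T b) (Ne.symm hb)
    rw [if_pos hbpos]
    have heq : prS J t h (fun x => x i = a ∧ x T = b ∧ x i₀ = u)
        = prS J t h (fun x => x T = b ∧ x i₀ = u) * prTwo p T i b a / prOne p T b := by
      rw [eq_div_iff hb]
      exact hCI
    rw [heq]
    ring
end Proofs7
section Proofs8

variable {n : ℕ} (J : (Fin n → X) → (Fin n → Option X) → ℝ)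

lemma pr1H_nonneg (hJ0 : ∀ x y, 0 ≤ J x y) (i₀ : Fin n) (t : ℕ) (u : X)
    (h : Fin n → Option X) : 0 ≤ pr1H J i₀ t u h := by
  rw [pr1H_eq_prS]; exact prS_nonneg J hJ0 t h _

lemma prI1H_nonneg (hJ0 : ∀ x y, 0 ≤ J x y) (i₀ : Fin n) (t : ℕ) (k : Fin n) (b : X) (u : X)
    (h : Fin n → Option X) : 0 ≤ prI1H J i₀ t k b u h := by
  rw [prI1H_eq_prS]; exact prS_nonneg J hJ0 t h _

lemma prI1H_le_pr1H (hJ0 : ∀ x y, 0 ≤ J x y) (i₀ : Fin n) (t : ℕ) (k : Fin n) (b : X) (u : X)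
    (h : Fin n → Option X) : prI1H J i₀ t k b u h ≤ pr1H J i₀ t u h := by
  rw [prI1H_eq_prS, pr1H_eq_prS]
  exact prS_mono J hJ0 t h fun x hx => hx.2

lemma prH_nonneg (hJ0 : ∀ x y, 0 ≤ J x y) (t : ℕ) (h : Fin n → Option X) :
    0 ≤ prH J t h :=
  Finset.sum_nonneg fun x _ => prXH_nonneg J hJ0 t x h

lemma cond1_nonneg (hJ0 : ∀ x y, 0 ≤ J x y) (i₀ : Fin n) (t : ℕ) (k : Fin n) (b : X) (u : X)
    (h : Fin n → Option X) : 0 ≤ cond1 J i₀ t k b u h :=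
  div_nonneg (prI1H_nonneg J hJ0 i₀ t k b u h) (pr1H_nonneg J hJ0 i₀ t u h)

lemma minC1_nonneg (hJ0 : ∀ x y, 0 ≤ J x y) (i₀ : Fin n) (t : ℕ) (k : Fin n) (b : X)
    (h : Fin n → Option X) : 0 ≤ minC1 J i₀ t k b h := by
  apply Real.sInf_nonneg
  rintro r ⟨u, _, rfl⟩
  exact cond1_nonneg J hJ0 i₀ t k b u h

lemma minC1_le_cond1 (hJ0 : ∀ x y, 0 ≤ J x y) (i₀ : Fin n) (t : ℕ) (k : Fin n) (b : X)
    (u : X) (h : Fin n → Option X) (hu : 0 < pr1H J i₀ t u h) :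
    minC1 J i₀ t k b h ≤ cond1 J i₀ t k b u h := by
  apply csInf_le
  · refine ⟨0, ?_⟩
    rintro r ⟨v, _, rfl⟩
    exact cond1_nonneg J hJ0 i₀ t k b v h
  · exact ⟨u, hu, rfl⟩

lemma key_E (hJ0 : ∀ x y, 0 ≤ J x y) (i₀ : Fin n) (t : ℕ) (k : Fin n) (b : X) (u : X)
    (h : Fin n → Option X) :
    (minC1 J i₀ t k b h / cond1 J i₀ t k b u h) * prI1H J i₀ t k b u h
      = minC1 J i₀ t k b h * pr1H J i₀ t u h := by
  by_cases hA : pr1H J i₀ t u h = 0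
  · have hM : prI1H J i₀ t k b u h = 0 :=
      le_antisymm (hA ▸ prI1H_le_pr1H J hJ0 i₀ t k b u h) (prI1H_nonneg J hJ0 i₀ t k b u h)
    rw [hM, hA, mul_zero, mul_zero]
  · have hApos : 0 < pr1H J i₀ t u h :=
      lt_of_le_of_ne (pr1H_nonneg J hJ0 i₀ t u h) (Ne.symm hA)
    by_cases hM : prI1H J i₀ t k b u h = 0
    · have hd : cond1 J i₀ t k b u h = 0 := by unfold cond1; rw [hM, zero_div]
      have hc : minC1 J i₀ t k b h = 0 :=
        le_antisymm (hd ▸ minC1_le_cond1 J hJ0 i₀ t k b u h hApos)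
          (minC1_nonneg J hJ0 i₀ t k b h)
      rw [hM, mul_zero, hc, zero_mul]
    · have hd : cond1 J i₀ t k b u h = prI1H J i₀ t k b u h / pr1H J i₀ t u h := rfl
      rw [hd, div_div_eq_mul_div, div_mul_cancel₀ _ hM]

end Proofs8
section Proofs9

variable {n : ℕ}

lemma prXH_step {p : (Fin n → X) → ℝ} {i₀ : Fin n}
    {J : (Fin n → X) → (Fin n → Option X) → ℝ} (hJ : IsSequentialMechanism1 p i₀ J)
    (h : Fin n → Option X) (t : ℕ) (x : Fin n → X) :
    prXH J (t + 1) x h = prXH J t x h * wstep J i₀ h t x := by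
  rw [prXH_eq_W hJ h (t + 1) x, prXH_eq_W hJ h t x]
  rw [show Wfun J i₀ h (t + 1) x = Wfun J i₀ h t x * wstep J i₀ h t x from rfl]
  ring

lemma step_main (hn : 1 ≤ n) (hX : 2 ≤ Fintype.card X)
    (p : (Fin n → X) → ℝ) (hp0 : ∀ x, 0 ≤ p x) (hp1 : ∑ x : Fin n → X, p x = 1)
    (hMarkov : IsMarkov p)
    (J : (Fin n → X) → (Fin n → Option X) → ℝ)
    (hJ : IsSequentialMechanism1 p ⟨0, hn⟩ J)
    (i : Fin n) (a : X) (t : ℕ) (hti : t < (i : ℕ))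
    (h : Fin n → Option X) (hpos : 0 < prH J (t + 1) h) (u' : X)
    (hu' : 0 < pr1H J ⟨0, hn⟩ t u' h ∧
      ∀ u : X, 0 < pr1H J ⟨0, hn⟩ t u h →
        cond1 J ⟨0, hn⟩ t i a u' h ≤ cond1 J ⟨0, hn⟩ t i a u h) :
    0 < pr1H J ⟨0, hn⟩ (t + 1) u' h ∧
      ∀ u : X, 0 < pr1H J ⟨0, hn⟩ (t + 1) u h →
        cond1 J ⟨0, hn⟩ (t + 1) i a u' h ≤ cond1 J ⟨0, hn⟩ (t + 1) i a u h := by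
  have hJ0 : ∀ x y, 0 ≤ J x y := hJ.1
  have htn : t < n := lt_trans hti i.isLt
  have hstep : ∀ x, prXH J (t + 1) x h = prXH J t x h * wstep J ⟨0, hn⟩ h t x :=
    prXH_step hJ h t
  have hq : ∀ u b, prS J t h (fun x => x i = a ∧ x ⟨t, htn⟩ = b ∧ x ⟨0, hn⟩ = u)
      = (if 0 < prOne p ⟨t, htn⟩ b then
          prTwo p ⟨t, htn⟩ i b a / prOne p ⟨t, htn⟩ b else 0)
        * prS J t h (fun x => x ⟨t, htn⟩ = b ∧ x ⟨0, hn⟩ = u) :=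
    fun u b => q_factor hn p hp0 hX hMarkov J hJ t i hti h a u b
  rcases hhT : h ⟨t, htn⟩ with _ | b₀
  · -- none case
    have hws : ∀ x : Fin n → X, wstep J ⟨0, hn⟩ h t x
        = 1 - minC1 J ⟨0, hn⟩ t ⟨t, htn⟩ (x ⟨t, htn⟩) h
            / cond1 J ⟨0, hn⟩ t ⟨t, htn⟩ (x ⟨t, htn⟩) (x ⟨0, hn⟩) h := by
      intro x
      unfold wstep
      rw [dif_pos htn, hhT, Option.elim_none]
    set qf : X → ℝ := fun b => if 0 < prOne p ⟨t, htn⟩ b then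
        prTwo p ⟨t, htn⟩ i b a / prOne p ⟨t, htn⟩ b else 0 with hqf
    have hq2 : ∀ u b,
        prS J t h (fun x => x i = a ∧ x ⟨t, htn⟩ = b ∧ x ⟨0, hn⟩ = u)
          = qf b * prS J t h (fun x => x ⟨t, htn⟩ = b ∧ x ⟨0, hn⟩ = u) := hq
    have hA'2 : ∀ u, pr1H J ⟨0, hn⟩ (t + 1) u h
        = (1 - ∑ b : X, minC1 J ⟨0, hn⟩ t ⟨t, htn⟩ b h) * pr1H J ⟨0, hn⟩ t u h := by
      intro u
      have e1 : pr1H J ⟨0, hn⟩ (t + 1) u h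
          = pr1H J ⟨0, hn⟩ t u h
            - ∑ x : Fin n → X, (if x ⟨0, hn⟩ = u then
                minC1 J ⟨0, hn⟩ t ⟨t, htn⟩ (x ⟨t, htn⟩) h
                  / cond1 J ⟨0, hn⟩ t ⟨t, htn⟩ (x ⟨t, htn⟩) u h * prXH J t x h else 0) := by
        rw [pr1H_eq_prS, pr1H_eq_prS]
        unfold prS
        rw [← Finset.sum_sub_distrib]
        refine Finset.sum_congr rfl fun x _ => ?_
        rw [hstep x, hws x]
        by_cases h1 : x ⟨0, hn⟩ = u <;> simp [h1] <;> ring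
      have e2 : (∑ x : Fin n → X, (if x ⟨0, hn⟩ = u then
              minC1 J ⟨0, hn⟩ t ⟨t, htn⟩ (x ⟨t, htn⟩) h
                / cond1 J ⟨0, hn⟩ t ⟨t, htn⟩ (x ⟨t, htn⟩) u h * prXH J t x h else 0))
          = ∑ b : X, minC1 J ⟨0, hn⟩ t ⟨t, htn⟩ b h * pr1H J ⟨0, hn⟩ t u h := by
        rw [sum_partition_coord (⟨t, htn⟩ : Fin n) (fun x => if x ⟨0, hn⟩ = u then
          minC1 J ⟨0, hn⟩ t ⟨t, htn⟩ (x ⟨t, htn⟩) h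
            / cond1 J ⟨0, hn⟩ t ⟨t, htn⟩ (x ⟨t, htn⟩) u h * prXH J t x h else 0)]
        refine Finset.sum_congr rfl fun b _ => ?_
        have e3 : (∑ x : Fin n → X, if x ⟨t, htn⟩ = b then (if x ⟨0, hn⟩ = u then
              minC1 J ⟨0, hn⟩ t ⟨t, htn⟩ (x ⟨t, htn⟩) h
                / cond1 J ⟨0, hn⟩ t ⟨t, htn⟩ (x ⟨t, htn⟩) u h * prXH J t x h else 0) else 0)
            = minC1 J ⟨0, hn⟩ t ⟨t, htn⟩ b h / cond1 J ⟨0, hn⟩ t ⟨t, htn⟩ b u h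
                * prS J t h (fun x => x ⟨t, htn⟩ = b ∧ x ⟨0, hn⟩ = u) := by
          unfold prS
          rw [Finset.mul_sum]
          refine Finset.sum_congr rfl fun x _ => ?_
          by_cases h1 : x ⟨t, htn⟩ = b <;> by_cases h2 : x ⟨0, hn⟩ = u <;>
            simp [h1, h2] <;> ring
        rw [e3, ← prI1H_eq_prS]
        exact key_E J hJ0 ⟨0, hn⟩ t ⟨t, htn⟩ b u h
      rw [e1, e2, ← Finset.sum_mul]
      ring
    have hB'2 : ∀ u, prI1H J ⟨0, hn⟩ (t + 1) i a u h
        = prI1H J ⟨0, hn⟩ t i a u h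
          - (∑ b : X, qf b * minC1 J ⟨0, hn⟩ t ⟨t, htn⟩ b h) * pr1H J ⟨0, hn⟩ t u h := by
      intro u
      have e1 : prI1H J ⟨0, hn⟩ (t + 1) i a u h
          = prI1H J ⟨0, hn⟩ t i a u h
            - ∑ x : Fin n → X, (if x i = a ∧ x ⟨0, hn⟩ = u then
                minC1 J ⟨0, hn⟩ t ⟨t, htn⟩ (x ⟨t, htn⟩) h
                  / cond1 J ⟨0, hn⟩ t ⟨t, htn⟩ (x ⟨t, htn⟩) u h * prXH J t x h else 0) := by
        rw [prI1H_eq_prS, prI1H_eq_prS]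
        unfold prS
        rw [← Finset.sum_sub_distrib]
        refine Finset.sum_congr rfl fun x _ => ?_
        rw [hstep x, hws x]
        by_cases h0 : x i = a <;> by_cases h1 : x ⟨0, hn⟩ = u <;> simp [h0, h1] <;> ring
      have e2 : (∑ x : Fin n → X, (if x i = a ∧ x ⟨0, hn⟩ = u then
              minC1 J ⟨0, hn⟩ t ⟨t, htn⟩ (x ⟨t, htn⟩) h
                / cond1 J ⟨0, hn⟩ t ⟨t, htn⟩ (x ⟨t, htn⟩) u h * prXH J t x h else 0))
          = ∑ b : X, qf b * minC1 J ⟨0, hn⟩ t ⟨t, htn⟩ b h * pr1H J ⟨0, hn⟩ t u h := by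
        rw [sum_partition_coord (⟨t, htn⟩ : Fin n) (fun x => if x i = a ∧ x ⟨0, hn⟩ = u then
          minC1 J ⟨0, hn⟩ t ⟨t, htn⟩ (x ⟨t, htn⟩) h
            / cond1 J ⟨0, hn⟩ t ⟨t, htn⟩ (x ⟨t, htn⟩) u h * prXH J t x h else 0)]
        refine Finset.sum_congr rfl fun b _ => ?_
        have e3 : (∑ x : Fin n → X, if x ⟨t, htn⟩ = b then (if x i = a ∧ x ⟨0, hn⟩ = u then
              minC1 J ⟨0, hn⟩ t ⟨t, htn⟩ (x ⟨t, htn⟩) h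
                / cond1 J ⟨0, hn⟩ t ⟨t, htn⟩ (x ⟨t, htn⟩) u h * prXH J t x h else 0) else 0)
            = minC1 J ⟨0, hn⟩ t ⟨t, htn⟩ b h / cond1 J ⟨0, hn⟩ t ⟨t, htn⟩ b u h
                * prS J t h (fun x => x i = a ∧ x ⟨t, htn⟩ = b ∧ x ⟨0, hn⟩ = u) := by
          unfold prS
          rw [Finset.mul_sum]
          refine Finset.sum_congr rfl fun x _ => ?_
          by_cases h0 : x i = a <;> by_cases h1 : x ⟨t, htn⟩ = b <;>
            by_cases h2 : x ⟨0, hn⟩ = u <;> simp [h0, h1, h2] <;> ring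
        rw [e3, hq2 u b, ← prI1H_eq_prS]
        calc minC1 J ⟨0, hn⟩ t ⟨t, htn⟩ b h / cond1 J ⟨0, hn⟩ t ⟨t, htn⟩ b u h
              * (qf b * prI1H J ⟨0, hn⟩ t ⟨t, htn⟩ b u h)
            = qf b * (minC1 J ⟨0, hn⟩ t ⟨t, htn⟩ b h / cond1 J ⟨0, hn⟩ t ⟨t, htn⟩ b u h
                * prI1H J ⟨0, hn⟩ t ⟨t, htn⟩ b u h) := by ring
          _ = qf b * (minC1 J ⟨0, hn⟩ t ⟨t, htn⟩ b h * pr1H J ⟨0, hn⟩ t u h) := by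
              rw [key_E J hJ0 ⟨0, hn⟩ t ⟨t, htn⟩ b u h]
          _ = qf b * minC1 J ⟨0, hn⟩ t ⟨t, htn⟩ b h * pr1H J ⟨0, hn⟩ t u h := by ring
      rw [e1, e2, ← Finset.sum_mul]
    have hsum : prH J (t + 1) h
        = (1 - ∑ b : X, minC1 J ⟨0, hn⟩ t ⟨t, htn⟩ b h) * prH J t h := by
      rw [prH_eq_sum_pr1H J ⟨0, hn⟩ (t + 1) h, prH_eq_sum_pr1H J ⟨0, hn⟩ t h,
        Finset.mul_sum]
      exact Finset.sum_congr rfl fun u _ => hA'2 u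
    have hpt : 0 < prH J t h := lt_of_lt_of_le hpos (prH_succ_le J hJ0 t h)
    have h1C : 0 < 1 - ∑ b : X, minC1 J ⟨0, hn⟩ t ⟨t, htn⟩ b h := by
      by_contra hc
      push_neg at hc
      rw [hsum] at hpos
      nlinarith
    constructor
    · rw [hA'2 u']
      exact mul_pos h1C hu'.1
    · intro u hu
      have hAu : 0 < pr1H J ⟨0, hn⟩ t u h := by
        by_contra hA
        push_neg at hA
        have h0 : pr1H J ⟨0, hn⟩ t u h = 0 :=
          le_antisymm hA (pr1H_nonneg J hJ0 ⟨0, hn⟩ t u h)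
        rw [hA'2 u, h0, mul_zero] at hu
        exact lt_irrefl 0 hu
      have hmin := hu'.2 u hAu
      unfold cond1 at hmin ⊢
      rw [div_le_div_iff₀ hu'.1 hAu] at hmin
      rw [hB'2 u', hB'2 u, hA'2 u', hA'2 u,
        div_le_div_iff₀ (mul_pos h1C hu'.1) (mul_pos h1C hAu)]
      nlinarith [mul_le_mul_of_nonneg_left hmin h1C.le]
  · -- some b₀ case
    have hws : ∀ x : Fin n → X, wstep J ⟨0, hn⟩ h t x
        = if x ⟨t, htn⟩ = b₀ then
            minC1 J ⟨0, hn⟩ t ⟨t, htn⟩ b₀ h / cond1 J ⟨0, hn⟩ t ⟨t, htn⟩ b₀ (x ⟨0, hn⟩) h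
          else 0 := by
      intro x
      unfold wstep
      rw [dif_pos htn, hhT, Option.elim_some]
    have hA'2 : ∀ u, pr1H J ⟨0, hn⟩ (t + 1) u h
        = minC1 J ⟨0, hn⟩ t ⟨t, htn⟩ b₀ h * pr1H J ⟨0, hn⟩ t u h := by
      intro u
      have hA'eq : pr1H J ⟨0, hn⟩ (t + 1) u h
          = (minC1 J ⟨0, hn⟩ t ⟨t, htn⟩ b₀ h / cond1 J ⟨0, hn⟩ t ⟨t, htn⟩ b₀ u h)
              * prS J t h (fun x => x ⟨t, htn⟩ = b₀ ∧ x ⟨0, hn⟩ = u) := by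
        rw [pr1H_eq_prS]
        unfold prS
        rw [Finset.mul_sum]
        refine Finset.sum_congr rfl fun x _ => ?_
        rw [hstep x, hws x]
        by_cases h1 : x ⟨0, hn⟩ = u <;> by_cases h2 : x ⟨t, htn⟩ = b₀ <;>
          simp [h1, h2] <;> ring
      rw [hA'eq, ← prI1H_eq_prS]
      exact key_E J hJ0 ⟨0, hn⟩ t ⟨t, htn⟩ b₀ u h
    have hsum : prH J (t + 1) h = minC1 J ⟨0, hn⟩ t ⟨t, htn⟩ b₀ h * prH J t h := by
      rw [prH_eq_sum_pr1H J ⟨0, hn⟩ (t + 1) h, prH_eq_sum_pr1H J ⟨0, hn⟩ t h,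
        Finset.mul_sum]
      exact Finset.sum_congr rfl fun u _ => hA'2 u
    have hcpos : 0 < minC1 J ⟨0, hn⟩ t ⟨t, htn⟩ b₀ h := by
      by_contra hc
      push_neg at hc
      have h1 : prH J (t + 1) h ≤ 0 := by
        rw [hsum]
        have := prH_nonneg J hJ0 t h
        nlinarith
      linarith
    set qb : ℝ := if 0 < prOne p ⟨t, htn⟩ b₀ then
        prTwo p ⟨t, htn⟩ i b₀ a / prOne p ⟨t, htn⟩ b₀ else 0 with hqb
    have hB'2 : ∀ u, prI1H J ⟨0, hn⟩ (t + 1) i a u h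
        = qb * (minC1 J ⟨0, hn⟩ t ⟨t, htn⟩ b₀ h * pr1H J ⟨0, hn⟩ t u h) := by
      intro u
      have hB'eq : prI1H J ⟨0, hn⟩ (t + 1) i a u h
          = (minC1 J ⟨0, hn⟩ t ⟨t, htn⟩ b₀ h / cond1 J ⟨0, hn⟩ t ⟨t, htn⟩ b₀ u h)
              * prS J t h (fun x => x i = a ∧ x ⟨t, htn⟩ = b₀ ∧ x ⟨0, hn⟩ = u) := by
        rw [prI1H_eq_prS]
        unfold prS
        rw [Finset.mul_sum]
        refine Finset.sum_congr rfl fun x _ => ?_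
        rw [hstep x, hws x]
        by_cases h0 : x i = a <;> by_cases h1 : x ⟨0, hn⟩ = u <;>
          by_cases h2 : x ⟨t, htn⟩ = b₀ <;> simp [h0, h1, h2] <;> ring
      rw [hB'eq, hq u b₀, ← prI1H_eq_prS, ← hqb]
      calc (minC1 J ⟨0, hn⟩ t ⟨t, htn⟩ b₀ h / cond1 J ⟨0, hn⟩ t ⟨t, htn⟩ b₀ u h)
            * (qb * prI1H J ⟨0, hn⟩ t ⟨t, htn⟩ b₀ u h)
          = qb * ((minC1 J ⟨0, hn⟩ t ⟨t, htn⟩ b₀ h / cond1 J ⟨0, hn⟩ t ⟨t, htn⟩ b₀ u h)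
              * prI1H J ⟨0, hn⟩ t ⟨t, htn⟩ b₀ u h) := by ring
        _ = qb * (minC1 J ⟨0, hn⟩ t ⟨t, htn⟩ b₀ h * pr1H J ⟨0, hn⟩ t u h) := by
              rw [key_E J hJ0 ⟨0, hn⟩ t ⟨t, htn⟩ b₀ u h]
    constructor
    · rw [hA'2 u']
      exact mul_pos hcpos hu'.1
    · intro u hu
      have hAu : 0 < pr1H J ⟨0, hn⟩ t u h := by
        by_contra hA
        push_neg at hA
        have h0 : pr1H J ⟨0, hn⟩ t u h = 0 :=
          le_antisymm hA (pr1H_nonneg J hJ0 ⟨0, hn⟩ t u h)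
        rw [hA'2 u, h0, mul_zero] at hu
        exact lt_irrefl 0 hu
      have e : ∀ v, 0 < pr1H J ⟨0, hn⟩ t v h → cond1 J ⟨0, hn⟩ (t + 1) i a v h = qb := by
        intro v hv
        unfold cond1
        rw [hB'2 v, hA'2 v, mul_div_assoc,
          div_self (ne_of_gt (mul_pos hcpos hv)), mul_one]
      rw [e u' hu'.1, e u hAu]

end Proofs9
section Proofs10

variable {n : ℕ} (J : (Fin n → X) → (Fin n → Option X) → ℝ)

lemma pr1H_zero_h (i₀ : Fin n) (u : X) (h h' : Fin n → Option X) :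
    pr1H J i₀ 0 u h = pr1H J i₀ 0 u h' := by
  unfold pr1H
  refine Finset.sum_congr rfl fun x _ => Finset.sum_congr rfl fun y _ => ?_
  exact if_congr ⟨fun hc => ⟨hc.1, agreeN_zero y h'⟩, fun hc => ⟨hc.1, agreeN_zero y h⟩⟩ rfl rfl

lemma prI1H_zero_h (i₀ : Fin n) (i : Fin n) (a : X) (u : X) (h h' : Fin n → Option X) :
    prI1H J i₀ 0 i a u h = prI1H J i₀ 0 i a u h' := by
  unfold prI1H
  refine Finset.sum_congr rfl fun x _ => Finset.sum_congr rfl fun y _ => ?_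
  exact if_congr ⟨fun hc => ⟨hc.1, hc.2.1, agreeN_zero y h'⟩,
    fun hc => ⟨hc.1, hc.2.1, agreeN_zero y h⟩⟩ rfl rfl

lemma cond1_zero_h (i₀ : Fin n) (i : Fin n) (a : X) (u : X) (h h' : Fin n → Option X) :
    cond1 J i₀ 0 i a u h = cond1 J i₀ 0 i a u h' := by
  unfold cond1
  rw [pr1H_zero_h J i₀ u h h', prI1H_zero_h J i₀ i a u h h']

lemma prH_zero (p : (Fin n → X) → ℝ) (hp1 : ∑ x : Fin n → X, p x = 1)
    (hJp : ∀ x, ∑ y : Fin n → Option X, J x y = p x) (h : Fin n → Option X) :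
    prH J 0 h = 1 := by
  unfold prH
  have e : ∀ x : Fin n → X, prXH J 0 x h = p x := fun x => by
    unfold prXH
    rw [← hJp x]
    exact Finset.sum_congr rfl fun y _ => if_pos (agreeN_zero y h)
  rw [Finset.sum_congr rfl fun x _ => e x, hp1]

end Proofs10


/-- argmin-preservation lemma for Markov chains: suppose `X_1, …, X_n` is a
Markov chain, the single sensitive position is `i₀ = 0` (i.e. `K = {1}`, one-based), and
`Y` is generated by the sequential privacy mechanism.  Then for every `i`, every `a`,
every `t < i` and every history `h` with `P(Y_{[t+1]} = h_{[t+1]}) > 0`: any `u*`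
minimizing `u ↦ P(X_i = a | X_1 = u, Y_{[t]} = h_{[t]})` over the `u` of positive
probability also minimizes `u ↦ P(X_i = a | X_1 = u, Y_{[t+1]} = h_{[t+1]})`.
In particular, for every `i` and `a` the unconditional minimum
`min_u P(X_i = a | X_1 = u)` is attained at some `u*` which also attains
`min_u P(X_i = a | X_1 = u, Y_{[i-1]} = h)` for every positive-probability history. -/
theorem markov_argmin_preserved {n : ℕ} (hn : 1 ≤ n) (hX : 2 ≤ Fintype.card X)
    (p : (Fin n → X) → ℝ) (hp0 : ∀ x, 0 ≤ p x) (hp1 : ∑ x : Fin n → X, p x = 1)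
    (hMarkov : IsMarkov p)
    (J : (Fin n → X) → (Fin n → Option X) → ℝ)
    (hJ : IsSequentialMechanism1 p ⟨0, hn⟩ J) :
    (∀ (i : Fin n) (a : X) (t : ℕ), t < (i : ℕ) →
      ∀ h : Fin n → Option X, 0 < prH J (t + 1) h →
      ∀ u' : X,
        (0 < pr1H J ⟨0, hn⟩ t u' h ∧
          ∀ u : X, 0 < pr1H J ⟨0, hn⟩ t u h →
            cond1 J ⟨0, hn⟩ t i a u' h ≤ cond1 J ⟨0, hn⟩ t i a u h) →
        (0 < pr1H J ⟨0, hn⟩ (t + 1) u' h ∧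
          ∀ u : X, 0 < pr1H J ⟨0, hn⟩ (t + 1) u h →
            cond1 J ⟨0, hn⟩ (t + 1) i a u' h ≤ cond1 J ⟨0, hn⟩ (t + 1) i a u h)) ∧
    (∀ (i : Fin n) (a : X), ∃ u' : X,
      (0 < pr1H J ⟨0, hn⟩ 0 u' (fun _ => (none : Option X)) ∧
        ∀ u : X, 0 < pr1H J ⟨0, hn⟩ 0 u (fun _ => (none : Option X)) →
          cond1 J ⟨0, hn⟩ 0 i a u' (fun _ => (none : Option X)) ≤ cond1 J ⟨0, hn⟩ 0 i a u (fun _ => (none : Option X))) ∧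
      ∀ h : Fin n → Option X, 0 < prH J (i : ℕ) h →
        (0 < pr1H J ⟨0, hn⟩ (i : ℕ) u' h ∧
          ∀ u : X, 0 < pr1H J ⟨0, hn⟩ (i : ℕ) u h →
            cond1 J ⟨0, hn⟩ (i : ℕ) i a u' h ≤ cond1 J ⟨0, hn⟩ (i : ℕ) i a u h)) := by
  constructor
  · intro i a t hti h hpos u' hu'
    exact step_main hn hX p hp0 hp1 hMarkov J hJ i a t hti h hpos u' hu'
  · intro i a
    have hJ0 : ∀ x y, 0 ≤ J x y := hJ.1
    set h₀ : Fin n → Option X := fun _ => (none : Option X) with hh₀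
    have hex : ∃ u : X, 0 < pr1H J ⟨0, hn⟩ 0 u h₀ := by
      by_contra hc
      push_neg at hc
      have hz : ∀ u, pr1H J ⟨0, hn⟩ 0 u h₀ = 0 := fun u =>
        le_antisymm (hc u) (pr1H_nonneg J hJ0 ⟨0, hn⟩ 0 u h₀)
      have h0 : prH J 0 h₀ = 0 := by
        rw [prH_eq_sum_pr1H J ⟨0, hn⟩ 0 h₀]
        simp [hz]
      rw [prH_zero J p hp1 hJ.2.1 h₀] at h0
      linarith
    obtain ⟨u₀, hu₀⟩ := hex
    set s : Finset X := Finset.univ.filter (fun u => 0 < pr1H J ⟨0, hn⟩ 0 u h₀) with hs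
    have hsne : s.Nonempty := ⟨u₀, by simp [hs, hu₀]⟩
    obtain ⟨u', hu'mem, hu'min⟩ :=
      Finset.exists_min_image s (fun u => cond1 J ⟨0, hn⟩ 0 i a u h₀) hsne
    have hu'pos : 0 < pr1H J ⟨0, hn⟩ 0 u' h₀ := by
      have hm := hu'mem
      simp only [hs, Finset.mem_filter, Finset.mem_univ, true_and] at hm
      exact hm
    have base : ∀ h : Fin n → Option X,
        0 < pr1H J ⟨0, hn⟩ 0 u' h ∧
          ∀ u, 0 < pr1H J ⟨0, hn⟩ 0 u h →
            cond1 J ⟨0, hn⟩ 0 i a u' h ≤ cond1 J ⟨0, hn⟩ 0 i a u h := by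
      intro h
      constructor
      · rw [pr1H_zero_h J ⟨0, hn⟩ u' h h₀]
        exact hu'pos
      · intro u hu
        rw [cond1_zero_h J ⟨0, hn⟩ i a u' h h₀, cond1_zero_h J ⟨0, hn⟩ i a u h h₀]
        apply hu'min
        rw [pr1H_zero_h J ⟨0, hn⟩ u h h₀] at hu
        simp only [hs, Finset.mem_filter, Finset.mem_univ, true_and]
        exact hu
    have key : ∀ t : ℕ, t ≤ (i : ℕ) → ∀ h : Fin n → Option X, 0 < prH J t h →
        (0 < pr1H J ⟨0, hn⟩ t u' h ∧
          ∀ u, 0 < pr1H J ⟨0, hn⟩ t u h →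
            cond1 J ⟨0, hn⟩ t i a u' h ≤ cond1 J ⟨0, hn⟩ t i a u h) := by
      intro t
      induction t with
      | zero => intro _ h _; exact base h
      | succ m IH =>
        intro hle h hph
        have hmi : m < (i : ℕ) := by omega
        have hpm : 0 < prH J m h := lt_of_lt_of_le hph (prH_succ_le J hJ0 m h)
        exact step_main hn hX p hp0 hp1 hMarkov J hJ i a m hmi h hph u'
          (IH (by omega) h hpm)
    exact ⟨u', base h₀, fun h hpos => key (i : ℕ) le_rfl h hpos⟩

end GenotypeHiding
end
end

section
/- Mismatch identity: let q be a full-support probability mass function on 𝒳^n and let w(y|x) be a mechanism such that, under the joint law q(x)·w(y|x), the output Y is independent of X_K. Let p be another probability mass function on 𝒳^n and consider the joint law p(x)·w(y|x). Then the mutual information of (X_K, Y) under p, defined as the Kullback–Leibler divergence D(p_{X_K,Y} ‖ p_{X_K} × p_Y) between the p-joint law of (X_K, Y) and the product of its p-marginals, satisfies D(p_{X_K,Y} ‖ p_{X_K} × p_Y) = D(p_{X_K,Y} ‖ q_{X_K,Y}) − D(p_{X_K} ‖ q_{X_K}) − D(p_Y ‖ q_Y), where subscripts denote the corresponding marginal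 or joint distributions under p(x)·w(y|x) and q(x)·w(y|x) respectively. -/
open Finset
open scoped Classical

noncomputable section

namespace GenotypeHiding

variable {X : Type} [Fintype X] [DecidableEq X]

/-- Kullback–Leibler divergence `D(μ ‖ ν) = ∑_z μ(z) log (μ(z)/ν(z))` between two
probability mass functions on a finite set (with the convention `0 log 0 = 0`). -/
def klDiv {Z : Type} [Fintype Z] (μ ν : Z → ℝ) : ℝ :=
  ∑ z : Z, μ z * Real.log (μ z / ν z)

/-- Restriction of a sequence `x` to the sensitive positions `K`. -/
def restr {n : ℕ} (K : Finset (Fin n)) (x : Fin n → X) : ↥K → X := fun i => x (i : Fin n)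

/-- The joint law of `(X_K, Y)` induced by the data distribution `p` and the mechanism `w`. -/
def jointKY {n : ℕ} (p : (Fin n → X) → ℝ) (w : (Fin n → X) → (Fin n → Option X) → ℝ)
    (K : Finset (Fin n)) : (↥K → X) × (Fin n → Option X) → ℝ :=
  fun z => ∑ x : Fin n → X, if restr K x = z.1 then p x * w x z.2 else 0

/-- The marginal law of `X_K` under the data distribution `p`. -/
def margK {n : ℕ} (p : (Fin n → X) → ℝ) (K : Finset (Fin n)) (u : ↥K → X) : ℝ :=
  ∑ x : Fin n → X, if restr K x = u then p x else 0

/-- The marginal law of `Y` induced by the data distribution `p` and the mechanism `w`. -/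
def margY {n : ℕ} (p : (Fin n → X) → ℝ) (w : (Fin n → X) → (Fin n → Option X) → ℝ)
    (y : Fin n → Option X) : ℝ :=
  ∑ x : Fin n → X, p x * w x y

/-- The mutual information `I(X_K; Y)` under the joint law induced by `p` and `w`,
expressed as the KL divergence between the joint law of `(X_K, Y)` and the product of
its marginals. -/
def mutualInfoKY {n : ℕ} (p : (Fin n → X) → ℝ)
    (w : (Fin n → X) → (Fin n → Option X) → ℝ) (K : Finset (Fin n)) : ℝ :=
  klDiv (jointKY p w K) (fun z => margK p K z.1 * margY p w z.2)


/-- mismatch identity: let `q` be a full-support pmf on `𝒳^n` and `w` a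
mechanism whose output `Y` is independent of `X_K` under `q(x)·w(y|x)`.  For any other
pmf `p` on `𝒳^n`, the mutual information of `(X_K, Y)` under `p(x)·w(y|x)` satisfies
`I_p(X_K; Y) = D(p_{X_K,Y} ‖ q_{X_K,Y}) − D(p_{X_K} ‖ q_{X_K}) − D(p_Y ‖ q_Y)`. -/
theorem mismatch_identity {n : ℕ} (hn : 1 ≤ n) (hX : 2 ≤ Fintype.card X)
    (K : Finset (Fin n))
    (q : (Fin n → X) → ℝ) (hq0 : ∀ x, 0 < q x) (hq1 : ∑ x : Fin n → X, q x = 1)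
    (w : (Fin n → X) → (Fin n → Option X) → ℝ)
    (hw0 : ∀ x y, 0 ≤ w x y) (hw1 : ∀ x, ∑ y : Fin n → Option X, w x y = 1)
    (hqpriv : ∀ z : (↥K → X) × (Fin n → Option X),
      jointKY q w K z = margK q K z.1 * margY q w z.2)
    (p : (Fin n → X) → ℝ) (hp0 : ∀ x, 0 ≤ p x) (hp1 : ∑ x : Fin n → X, p x = 1) :
    mutualInfoKY p w K
      = klDiv (jointKY p w K) (jointKY q w K)
          - klDiv (margK p K) (margK q K)
          - klDiv (margY p w) (margY q w) := by
  have hjpnn : ∀ z, 0 ≤ jointKY p w K z := by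
    intro z
    apply Finset.sum_nonneg
    intro x _
    split
    · exact mul_nonneg (hp0 x) (hw0 x z.2)
    · exact le_rfl
  -- marginalizing the joint over y gives margK
  have hA : ∀ u : ↥K → X, ∑ y : Fin n → Option X, jointKY p w K (u, y) = margK p K u := by
    intro u
    unfold jointKY margK
    rw [Finset.sum_comm]
    apply Finset.sum_congr rfl
    intro x _
    by_cases h : restr K x = u
    · simp only [h, if_true, ← Finset.mul_sum, hw1 x, mul_one]
    · simp [h]
  -- marginalizing the joint over u gives margY
  have hB : ∀ y : Fin n → Option X, ∑ u : ↥K → X, jointKY p w K (u, y) = margY p w y := by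
    intro y
    unfold jointKY margY
    rw [Finset.sum_comm]
    apply Finset.sum_congr rfl
    intro x _
    simp [Finset.sum_ite_eq]
  have hKL_K : klDiv (margK p K) (margK q K)
      = ∑ z : (↥K → X) × (Fin n → Option X),
          jointKY p w K z * Real.log (margK p K z.1 / margK q K z.1) := by
    rw [Fintype.sum_prod_type]
    unfold klDiv
    apply Finset.sum_congr rfl
    intro u _
    dsimp only
    rw [← Finset.sum_mul, hA u]
  have hKL_Y : klDiv (margY p w) (margY q w)
      = ∑ z : (↥K → X) × (Fin n → Option X),
          jointKY p w K z * Real.log (margY p w z.2 / margY q w z.2) := by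
    rw [Fintype.sum_prod_type_right]
    unfold klDiv
    apply Finset.sum_congr rfl
    intro y _
    dsimp only
    rw [← Finset.sum_mul, hB y]
  unfold mutualInfoKY
  rw [hKL_K, hKL_Y]
  unfold klDiv
  rw [← Finset.sum_sub_distrib, ← Finset.sum_sub_distrib]
  apply Finset.sum_congr rfl
  intro z _
  by_cases hz : jointKY p w K z = 0
  · simp [hz]
  · have hzpos : 0 < jointKY p w K z := lt_of_le_of_ne (hjpnn z) (Ne.symm hz)
    -- extract a witness x₀
    obtain ⟨x0, _, hx0⟩ := Finset.exists_ne_zero_of_sum_ne_zero hz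
    have hres : restr K x0 = z.1 := by
      by_contra h; simp [h] at hx0
    have hpw : 0 < p x0 * w x0 z.2 := by
      rw [if_pos hres] at hx0
      exact lt_of_le_of_ne (mul_nonneg (hp0 x0) (hw0 x0 z.2)) (Ne.symm hx0)
    have hp0' : 0 < p x0 := by
      rcases (mul_pos_iff.mp hpw) with ⟨h1, _⟩ | ⟨h1, _⟩
      · exact h1
      · exact absurd h1 (not_lt.mpr (hp0 x0))
    have hw0' : 0 < w x0 z.2 := by
      rcases (mul_pos_iff.mp hpw) with ⟨_, h2⟩ | ⟨_, h2⟩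
      · exact h2
      · exact absurd h2 (not_lt.mpr (hw0 x0 z.2))
    have hmKp : 0 < margK p K z.1 := by
      have h1 : p x0 ≤ margK p K z.1 := by
        have := Finset.single_le_sum (f := fun x => if restr K x = z.1 then p x else 0)
          (fun x _ => by by_cases h : restr K x = z.1 <;> simp [h, hp0 x]) (Finset.mem_univ x0)
        simpa [margK, hres] using this
      linarith
    have hmYp : 0 < margY p w z.2 := by
      have h1 : p x0 * w x0 z.2 ≤ margY p w z.2 :=
        Finset.single_le_sum (f := fun x => p x * w x z.2)
          (fun x _ => mul_nonneg (hp0 x) (hw0 x z.2)) (Finset.mem_univ x0)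
      linarith
    have hmKq : 0 < margK q K z.1 := by
      have h1 : q x0 ≤ margK q K z.1 := by
        have := Finset.single_le_sum (f := fun x => if restr K x = z.1 then q x else 0)
          (fun x _ => by by_cases h : restr K x = z.1 <;> simp [h, (hq0 x).le]) (Finset.mem_univ x0)
        simpa [margK, hres] using this
      linarith [hq0 x0]
    have hmYq : 0 < margY q w z.2 := by
      have h1 : q x0 * w x0 z.2 ≤ margY q w z.2 :=
        Finset.single_le_sum (f := fun x => q x * w x z.2)
          (fun x _ => mul_nonneg (hq0 x).le (hw0 x z.2)) (Finset.mem_univ x0)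
      nlinarith [hq0 x0]
    rw [hqpriv z]
    rw [Real.log_div hz (mul_ne_zero hmKp.ne' hmYp.ne'),
        Real.log_div hz (mul_ne_zero hmKq.ne' hmYq.ne'),
        Real.log_div hmKp.ne' hmKq.ne', Real.log_div hmYp.ne' hmYq.ne',
        Real.log_mul hmKp.ne' hmYp.ne', Real.log_mul hmKq.ne' hmYq.ne']
    ring

end GenotypeHiding
end
end

section
/- Robustness bound: let q be a full-support probability mass function on 𝒳^n and let w(y|x) be a mechanism such that, under the joint law q(x)·w(y|x), the output Y is independent of X_K. Let p be another probability mass function on 𝒳^n and consider the joint law p(x)·w(y|x). Then the privacy leakage under p, measured as the mutual information D(p_{X_K,Y} ‖ p_{X_K} × p_Y), is at most the Kullback–Leibler divergence between the two data distributions: D(p_{X_K,Y} ‖ p_{X_K} × p_Y) ≤ D(p ‖ q). -/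
open Finset
open scoped Classical

noncomputable section

namespace GenotypeHiding

variable {X : Type} [Fintype X] [DecidableEq X]

private lemma key_lower (x y : ℝ) (hx : 0 ≤ x) (hy : 0 ≤ y) (hxy : 0 < x → 0 < y) :
    x - y ≤ x * Real.log (x / y) := by
  rcases hx.eq_or_lt with h0 | h0
  · rw [← h0]; simpa using hy
  · have hy' := hxy h0
    have h1 : Real.log (y / x) ≤ y / x - 1 := Real.log_le_sub_one_of_pos (by positivity)
    have h2 : Real.log (x / y) = -Real.log (y / x) := by
      rw [Real.log_div h0.ne' hy'.ne', Real.log_div hy'.ne' h0.ne']; ring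
    have h3 : x * (y / x - 1) = y - x := by field_simp
    have h4 : x * Real.log (y / x) ≤ y - x := by
      calc x * Real.log (y / x) ≤ x * (y / x - 1) := by
            exact mul_le_mul_of_nonneg_left h1 h0.le
        _ = y - x := h3
    rw [h2, mul_neg]; linarith

private lemma key_upper (x y : ℝ) (hx : 0 ≤ x) (hy : 0 ≤ y) (hxy : 0 < x → 0 < y) :
    x * Real.log (y / x) ≤ y - x := by
  rcases hx.eq_or_lt with h0 | h0
  · rw [← h0]; simpa using hy
  · have hy' := hxy h0
    have h1 : Real.log (y / x) ≤ y / x - 1 := Real.log_le_sub_one_of_pos (by positivity)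
    have h3 : x * (y / x - 1) = y - x := by field_simp
    calc x * Real.log (y / x) ≤ x * (y / x - 1) := mul_le_mul_of_nonneg_left h1 h0.le
      _ = y - x := h3

private lemma log_sum_ineq {ι : Type*} [Fintype ι] (a b : ι → ℝ)
    (ha : ∀ i, 0 ≤ a i) (hb : ∀ i, 0 ≤ b i) (hab : ∀ i, b i = 0 → a i = 0) :
    (∑ i, a i) * Real.log ((∑ i, a i) / (∑ i, b i)) ≤ ∑ i, a i * Real.log (a i / b i) := by
  set A := ∑ i, a i with hA
  set B := ∑ i, b i with hB
  have hA0 : 0 ≤ A := Finset.sum_nonneg fun i _ => ha i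
  have hB0 : 0 ≤ B := Finset.sum_nonneg fun i _ => hb i
  rcases hA0.eq_or_lt with h0 | h0
  · have hall : ∀ i, a i = 0 := by
      intro i
      exact (Finset.sum_eq_zero_iff_of_nonneg (fun i _ => ha i)).mp h0.symm i (Finset.mem_univ i)
    have : A = 0 := h0.symm
    rw [this, zero_mul]
    apply Finset.sum_nonneg
    intro i _
    rw [hall i, zero_mul]
  · have hBpos : 0 < B := by
      rcases hB0.eq_or_lt with hb0 | hb0
      · exfalso
        have hallb : ∀ i, b i = 0 := by
          intro i
          exact (Finset.sum_eq_zero_iff_of_nonneg (fun i _ => hb i)).mp hb0.symm i (Finset.mem_univ i)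
        have : A = 0 := Finset.sum_eq_zero fun i _ => hab i (hallb i)
        exact absurd this h0.ne'
      · exact hb0
    have key : ∀ i, a i * Real.log (A / B) + a i - b i * (A / B) ≤
        a i * Real.log (a i / b i) := by
      intro i
      rcases (ha i).eq_or_lt with h | h
      · rw [← h]
        simp only [zero_mul, zero_add, zero_sub, neg_nonpos]
        exact mul_nonneg (hb i) (div_nonneg h0.le hB0)
      · have hbi : 0 < b i := by
          rcases (hb i).eq_or_lt with e | e
          · exact absurd (hab i e.symm) h.ne'
          · exact e
        have hk := key_lower (a i) (b i * (A / B)) (ha i) (by positivity)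
          (fun _ => by positivity)
        have hlog : Real.log (a i / (b i * (A / B))) =
            Real.log (a i / b i) - Real.log (A / B) := by
          rw [show a i / (b i * (A / B)) = (a i / b i) / (A / B) by
            field_simp]
          exact Real.log_div (by positivity) (by positivity)
        rw [hlog, mul_sub] at hk
        linarith
    have hsum : ∑ i, (a i * Real.log (A / B) + a i - b i * (A / B)) = A * Real.log (A / B) := by
      rw [Finset.sum_sub_distrib, Finset.sum_add_distrib, ← Finset.sum_mul, ← Finset.sum_mul]
      rw [← hA, ← hB]
      have : B * (A / B) = A := by field_simp
      rw [this]; ring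
    calc A * Real.log (A / B) = ∑ i, (a i * Real.log (A / B) + a i - b i * (A / B)) := hsum.symm
      _ ≤ ∑ i, a i * Real.log (a i / b i) := Finset.sum_le_sum fun i _ => key i

/-- robustness bound, Theorem 4: let `q` be a full-support pmf on `𝒳^n`
and `w` a mechanism whose output `Y` is independent of `X_K` under `q(x)·w(y|x)`.  For
any other pmf `p` on `𝒳^n`, the privacy leakage under `p(x)·w(y|x)`, measured as the
mutual information `I_p(X_K; Y) = D(p_{X_K,Y} ‖ p_{X_K} × p_Y)`, is at most the
Kullback–Leibler divergence between the two data distributions: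
`I_p(X_K; Y) ≤ D(p ‖ q)`. -/
theorem robustness_bound {n : ℕ} (hn : 1 ≤ n) (hX : 2 ≤ Fintype.card X)
    (K : Finset (Fin n))
    (q : (Fin n → X) → ℝ) (hq0 : ∀ x, 0 < q x) (hq1 : ∑ x : Fin n → X, q x = 1)
    (w : (Fin n → X) → (Fin n → Option X) → ℝ)
    (hw0 : ∀ x y, 0 ≤ w x y) (hw1 : ∀ x, ∑ y : Fin n → Option X, w x y = 1)
    (hqpriv : ∀ z : (↥K → X) × (Fin n → Option X),
      jointKY q w K z = margK q K z.1 * margY q w z.2)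
    (p : (Fin n → X) → ℝ) (hp0 : ∀ x, 0 ≤ p x) (hp1 : ∑ x : Fin n → X, p x = 1) :
    mutualInfoKY p w K ≤ klDiv p q := by
  classical
  -- nonnegativity facts
  have hjp0 : ∀ z : (↥K → X) × (Fin n → Option X), 0 ≤ jointKY p w K z := by
    intro z
    refine Finset.sum_nonneg fun x _ => ?_
    split
    · exact mul_nonneg (hp0 x) (hw0 x z.2)
    · exact le_rfl
  have hpK0 : ∀ u, 0 ≤ margK p K u := by
    intro u
    refine Finset.sum_nonneg fun x _ => ?_
    split
    · exact hp0 x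
    · exact le_rfl
  have hpY0 : ∀ y, 0 ≤ margY p w y :=
    fun y => Finset.sum_nonneg fun x _ => mul_nonneg (hp0 x) (hw0 x y)
  have hqY0 : ∀ y, 0 ≤ margY q w y :=
    fun y => Finset.sum_nonneg fun x _ => mul_nonneg (hq0 x).le (hw0 x y)
  -- marginals of the joint law
  have hmKp : ∀ (r : (Fin n → X) → ℝ) (u : ↥K → X),
      (∑ y : Fin n → Option X, jointKY r w K (u, y)) = margK r K u := by
    intro r u
    unfold jointKY margK
    rw [Finset.sum_comm]
    refine Finset.sum_congr rfl fun x _ => ?_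
    by_cases h : restr K x = u
    · simp only [h, if_true]
      rw [← Finset.mul_sum, hw1 x, mul_one]
    · simp [h]
  have hmYp : ∀ (r : (Fin n → X) → ℝ) (y : Fin n → Option X),
      (∑ u : ↥K → X, jointKY r w K (u, y)) = margY r w y := by
    intro r y
    unfold jointKY margY
    rw [Finset.sum_comm]
    refine Finset.sum_congr rfl fun x _ => ?_
    simp
  -- total masses
  have hKmass : ∀ (r : (Fin n → X) → ℝ), (∑ x : Fin n → X, r x) = 1 →
      (∑ u : ↥K → X, margK r K u) = 1 := by
    intro r hr
    unfold margK
    rw [Finset.sum_comm, ← hr]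
    refine Finset.sum_congr rfl fun x _ => ?_
    simp
  have hYmass : ∀ (r : (Fin n → X) → ℝ), (∑ x : Fin n → X, r x) = 1 →
      (∑ y : Fin n → Option X, margY r w y) = 1 := by
    intro r hr
    unfold margY
    rw [Finset.sum_comm, ← hr]
    refine Finset.sum_congr rfl fun x _ => ?_
    rw [← Finset.mul_sum, hw1 x, mul_one]
  -- margK q is everywhere positive
  have hqK : ∀ u : ↥K → X, 0 < margK q K u := by
    intro u
    obtain ⟨d⟩ : Nonempty X := Fintype.card_pos_iff.mp (by omega)
    have hres : restr K (fun i => if h : i ∈ K then u ⟨i, h⟩ else d) = u := by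
      funext i
      have hi : (i : Fin n) ∈ K := i.2
      simp [restr, hi]
    have hle : q (fun i => if h : i ∈ K then u ⟨i, h⟩ else d) ≤ margK q K u := by
      have h2 := Finset.single_le_sum
        (f := fun x => if restr K x = u then q x else 0)
        (fun x _ => by split; exacts [(hq0 x).le, le_rfl])
        (Finset.mem_univ (fun i => if h : i ∈ K then u ⟨i, h⟩ else d))
      rw [if_pos hres] at h2
      exact h2
    exact lt_of_lt_of_le (hq0 _) hle
  -- positivity consequences of jp z > 0
  have hexists : ∀ z : (↥K → X) × (Fin n → Option X), 0 < jointKY p w K z →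
      ∃ x, restr K x = z.1 ∧ 0 < w x z.2 := by
    intro z hz
    by_contra hcon
    push_neg at hcon
    have : jointKY p w K z = 0 := by
      unfold jointKY
      apply Finset.sum_eq_zero
      intro x _
      split
      next h =>
        rw [le_antisymm (hcon x h) (hw0 x z.2), mul_zero]
      next => rfl
    rw [this] at hz
    exact lt_irrefl 0 hz
  have hqYpos : ∀ z : (↥K → X) × (Fin n → Option X), 0 < jointKY p w K z →
      0 < margY q w z.2 := by
    intro z hz
    obtain ⟨x, -, hwx⟩ := hexists z hz
    have hle : q x * w x z.2 ≤ margY q w z.2 :=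
      Finset.single_le_sum (fun x' _ => mul_nonneg (hq0 x').le (hw0 x' z.2)) (Finset.mem_univ x)
    exact lt_of_lt_of_le (mul_pos (hq0 x) hwx) hle
  have hpKpos : ∀ z : (↥K → X) × (Fin n → Option X), 0 < jointKY p w K z →
      0 < margK p K z.1 := by
    intro z hz
    have h1 : jointKY p w K (z.1, z.2) ≤ ∑ y, jointKY p w K (z.1, y) :=
      Finset.single_le_sum (fun y _ => hjp0 (z.1, y)) (Finset.mem_univ z.2)
    rw [hmKp p z.1] at h1
    exact lt_of_lt_of_le hz h1
  have hpYpos : ∀ z : (↥K → X) × (Fin n → Option X), 0 < jointKY p w K z →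
      0 < margY p w z.2 := by
    intro z hz
    have h1 : jointKY p w K (z.1, z.2) ≤ ∑ u, jointKY p w K (u, z.2) :=
      Finset.single_le_sum (fun u _ => hjp0 (u, z.2)) (Finset.mem_univ z.1)
    rw [hmYp p z.2] at h1
    exact lt_of_lt_of_le hz h1
  -- Step A: pointwise log decomposition
  have hstepA : ∀ z : (↥K → X) × (Fin n → Option X),
      jointKY p w K z * Real.log (jointKY p w K z / (margK p K z.1 * margY p w z.2))
      = jointKY p w K z * Real.log (jointKY p w K z / jointKY q w K z)
        + jointKY p w K z * Real.log (margK q K z.1 / margK p K z.1)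
        + jointKY p w K z * Real.log (margY q w z.2 / margY p w z.2) := by
    intro z
    rcases (hjp0 z).eq_or_lt with h0 | h0
    · rw [← h0]; ring
    · have hpK := hpKpos z h0
      have hpY := hpYpos z h0
      have hqKz := hqK z.1
      have hqYz := hqYpos z h0
      rw [hqpriv z]
      rw [Real.log_div h0.ne' (mul_pos hpK hpY).ne',
          Real.log_div h0.ne' (mul_pos hqKz hqYz).ne',
          Real.log_div hqKz.ne' hpK.ne', Real.log_div hqYz.ne' hpY.ne',
          Real.log_mul hpK.ne' hpY.ne', Real.log_mul hqKz.ne' hqYz.ne']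
      ring
  have hdecomp : mutualInfoKY p w K =
      (∑ z : (↥K → X) × (Fin n → Option X),
        jointKY p w K z * Real.log (jointKY p w K z / jointKY q w K z))
      + (∑ z : (↥K → X) × (Fin n → Option X),
        jointKY p w K z * Real.log (margK q K z.1 / margK p K z.1))
      + (∑ z : (↥K → X) × (Fin n → Option X),
        jointKY p w K z * Real.log (margY q w z.2 / margY p w z.2)) := by
    unfold mutualInfoKY klDiv
    rw [← Finset.sum_add_distrib, ← Finset.sum_add_distrib]
    exact Finset.sum_congr rfl fun z _ => hstepA z
  -- Step B: the Gibbs terms are nonpositive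
  have hT1 : (∑ z : (↥K → X) × (Fin n → Option X),
      jointKY p w K z * Real.log (margK q K z.1 / margK p K z.1)) ≤ 0 := by
    have h1 : (∑ z : (↥K → X) × (Fin n → Option X),
        jointKY p w K z * Real.log (margK q K z.1 / margK p K z.1))
        = ∑ u : ↥K → X, margK p K u * Real.log (margK q K u / margK p K u) := by
      rw [Fintype.sum_prod_type]
      refine Finset.sum_congr rfl fun u _ => ?_
      dsimp only
      rw [← Finset.sum_mul, hmKp p u]
    rw [h1]
    calc (∑ u : ↥K → X, margK p K u * Real.log (margK q K u / margK p K u))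
        ≤ ∑ u : ↥K → X, (margK q K u - margK p K u) :=
          Finset.sum_le_sum fun u _ =>
            key_upper _ _ (hpK0 u) (hqK u).le (fun _ => hqK u)
      _ = 0 := by rw [Finset.sum_sub_distrib, hKmass q hq1, hKmass p hp1, sub_self]
  have hT2 : (∑ z : (↥K → X) × (Fin n → Option X),
      jointKY p w K z * Real.log (margY q w z.2 / margY p w z.2)) ≤ 0 := by
    have h1 : (∑ z : (↥K → X) × (Fin n → Option X),
        jointKY p w K z * Real.log (margY q w z.2 / margY p w z.2))
        = ∑ y : Fin n → Option X, margY p w y * Real.log (margY q w y / margY p w y) := by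
      rw [Fintype.sum_prod_type, Finset.sum_comm]
      refine Finset.sum_congr rfl fun y _ => ?_
      dsimp only
      rw [← Finset.sum_mul, hmYp p y]
    rw [h1]
    have hkey : ∀ y : Fin n → Option X,
        margY p w y * Real.log (margY q w y / margY p w y)
          ≤ margY q w y - margY p w y := by
      intro y
      refine key_upper _ _ (hpY0 y) (hqY0 y) ?_
      intro hy
      -- pY y > 0 → ∃ x, p x * w x y > 0 → w x y > 0 → qY y > 0
      by_contra hq'
      push_neg at hq'
      have hq'' : margY q w y = 0 := le_antisymm hq' (hqY0 y)
      have hall : ∀ x, w x y = 0 := by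
        intro x
        have := (Finset.sum_eq_zero_iff_of_nonneg
          (fun x' _ => mul_nonneg (hq0 x').le (hw0 x' y))).mp hq'' x (Finset.mem_univ x)
        rcases mul_eq_zero.mp this with h | h
        · exact absurd h (hq0 x).ne'
        · exact h
      have : margY p w y = 0 := by
        unfold margY
        exact Finset.sum_eq_zero fun x _ => by rw [hall x, mul_zero]
      rw [this] at hy
      exact lt_irrefl 0 hy
    calc (∑ y : Fin n → Option X, margY p w y * Real.log (margY q w y / margY p w y))
        ≤ ∑ y : Fin n → Option X, (margY q w y - margY p w y) :=
          Finset.sum_le_sum fun y _ => hkey y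
      _ = 0 := by rw [Finset.sum_sub_distrib, hYmass q hq1, hYmass p hp1, sub_self]
  -- Step D: data-processing bound D(jp‖jq) ≤ D(p‖q)
  have hstepD : (∑ z : (↥K → X) × (Fin n → Option X),
      jointKY p w K z * Real.log (jointKY p w K z / jointKY q w K z)) ≤ klDiv p q := by
    have hkl : klDiv p q = ∑ x : Fin n → X, ∑ y : Fin n → Option X,
        (p x * w x y) * Real.log ((p x * w x y) / (q x * w x y)) := by
      unfold klDiv
      refine Finset.sum_congr rfl fun x _ => ?_
      have hterm : ∀ y, (p x * w x y) * Real.log ((p x * w x y) / (q x * w x y))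
          = (p x * Real.log (p x / q x)) * w x y := by
        intro y
        rcases (hw0 x y).eq_or_lt with h | h
        · rw [← h]; ring
        · rw [mul_div_mul_right _ _ h.ne']
          ring
      calc p x * Real.log (p x / q x)
          = ∑ y : Fin n → Option X, (p x * Real.log (p x / q x)) * w x y := by
            rw [← Finset.mul_sum, hw1 x, mul_one]
        _ = ∑ y : Fin n → Option X,
            (p x * w x y) * Real.log ((p x * w x y) / (q x * w x y)) :=
            Finset.sum_congr rfl fun y _ => (hterm y).symm
    have hz : ∀ z : (↥K → X) × (Fin n → Option X),
        jointKY p w K z * Real.log (jointKY p w K z / jointKY q w K z) ≤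
        ∑ x : Fin n → X, if restr K x = z.1 then
          (p x * w x z.2) * Real.log ((p x * w x z.2) / (q x * w x z.2)) else 0 := by
      intro z
      have hls := log_sum_ineq
        (fun x => if restr K x = z.1 then p x * w x z.2 else 0)
        (fun x => if restr K x = z.1 then q x * w x z.2 else 0)
        (fun x => by split; exacts [mul_nonneg (hp0 x) (hw0 x z.2), le_rfl])
        (fun x => by split; exacts [mul_nonneg (hq0 x).le (hw0 x z.2), le_rfl])
        (fun x => by
          by_cases h : restr K x = z.1
          · simp only [if_pos h]
            intro hb
            rcases mul_eq_zero.mp hb with h' | h'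
            · exact absurd h' (hq0 x).ne'
            · rw [h', mul_zero]
          · simp [h])
      have hsplit : ∀ x : Fin n → X,
          (if restr K x = z.1 then p x * w x z.2 else 0) *
            Real.log ((if restr K x = z.1 then p x * w x z.2 else 0) /
              (if restr K x = z.1 then q x * w x z.2 else 0)) =
          (if restr K x = z.1 then
            (p x * w x z.2) * Real.log ((p x * w x z.2) / (q x * w x z.2)) else 0) := by
        intro x
        split
        · rfl
        · simp
      calc jointKY p w K z * Real.log (jointKY p w K z / jointKY q w K z)
          = (∑ x : Fin n → X, if restr K x = z.1 then p x * w x z.2 else 0) *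
              Real.log ((∑ x : Fin n → X, if restr K x = z.1 then p x * w x z.2 else 0) /
                (∑ x : Fin n → X, if restr K x = z.1 then q x * w x z.2 else 0)) := rfl
        _ ≤ ∑ x : Fin n → X,
              (if restr K x = z.1 then p x * w x z.2 else 0) *
                Real.log ((if restr K x = z.1 then p x * w x z.2 else 0) /
                  (if restr K x = z.1 then q x * w x z.2 else 0)) := hls
        _ = ∑ x : Fin n → X, if restr K x = z.1 then
              (p x * w x z.2) * Real.log ((p x * w x z.2) / (q x * w x z.2)) else 0 :=
            Finset.sum_congr rfl fun x _ => hsplit x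
    have hregroup : (∑ z : (↥K → X) × (Fin n → Option X),
        ∑ x : Fin n → X, if restr K x = z.1 then
          (p x * w x z.2) * Real.log ((p x * w x z.2) / (q x * w x z.2)) else 0)
        = ∑ x : Fin n → X, ∑ y : Fin n → Option X,
          (p x * w x y) * Real.log ((p x * w x y) / (q x * w x y)) := by
      calc (∑ z : (↥K → X) × (Fin n → Option X),
          ∑ x : Fin n → X, if restr K x = z.1 then
            (p x * w x z.2) * Real.log ((p x * w x z.2) / (q x * w x z.2)) else 0)
          = ∑ u : ↥K → X, ∑ y : Fin n → Option X, ∑ x : Fin n → X,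
              if restr K x = u then
                (p x * w x y) * Real.log ((p x * w x y) / (q x * w x y)) else 0 :=
            Fintype.sum_prod_type _
        _ = ∑ y : Fin n → Option X, ∑ u : ↥K → X, ∑ x : Fin n → X,
              if restr K x = u then
                (p x * w x y) * Real.log ((p x * w x y) / (q x * w x y)) else 0 :=
            Finset.sum_comm
        _ = ∑ y : Fin n → Option X, ∑ x : Fin n → X,
              (p x * w x y) * Real.log ((p x * w x y) / (q x * w x y)) := by
            refine Finset.sum_congr rfl fun y _ => ?_
            rw [Finset.sum_comm]
            refine Finset.sum_congr rfl fun x _ => ?_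
            simp
        _ = ∑ x : Fin n → X, ∑ y : Fin n → Option X,
              (p x * w x y) * Real.log ((p x * w x y) / (q x * w x y)) :=
            Finset.sum_comm
    calc (∑ z : (↥K → X) × (Fin n → Option X),
        jointKY p w K z * Real.log (jointKY p w K z / jointKY q w K z))
        ≤ ∑ z : (↥K → X) × (Fin n → Option X),
            ∑ x : Fin n → X, if restr K x = z.1 then
              (p x * w x z.2) * Real.log ((p x * w x z.2) / (q x * w x z.2)) else 0 :=
          Finset.sum_le_sum fun z _ => hz z
      _ = ∑ x : Fin n → X, ∑ y : Fin n → Option X,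
            (p x * w x y) * Real.log ((p x * w x y) / (q x * w x y)) := hregroup
      _ = klDiv p q := hkl.symm
  linarith [hdecomp, hT1, hT2, hstepD]


end GenotypeHiding
end
end

section
/- Greedy erasure matches hitting sets: given a universe U = {1,…,m}, nonempty subsets S_1,…,S_k ⊆ U with ⋃_j S_j = U, and any hitting set V for {S_1,…,S_k}, there exists an ordering o_1,…,o_m of U (namely one that visits all elements of U \ V before any element of V) such that the greedy erasure set satisfies E_π ⊆ V, and hence |E_π| ≤ |V|. Combined with the fact that every greedy erasure set is a hitting set, the minimum of |E_π| over all orderings equals the minimum cardinality of a hitting set for {S_1,…,S_k}. -/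
open Finset
open scoped Classical

noncomputable section

namespace GenotypeHiding

/-- One pass of the greedy erasure process: visiting the elements of the list in order
with `R` the set of already visited, non-erased elements and `E` the set of erased
elements, the element `v` currently visited is erased iff some set `S j` is entirely
contained in the visited non-erased elements together with `v`. -/
def greedyAux {m k : ℕ} (S : Fin k → Finset (Fin m)) :
    List (Fin m) → Finset (Fin m) → Finset (Fin m) → Finset (Fin m)
  | [], _, E => E
  | v :: rest, R, E =>
      if ∃ j : Fin k, S j ⊆ insert v R then greedyAux S rest R (insert v E)
      else greedyAux S rest (insert v R) E

/-- The greedy erasure set `E_π` produced by visiting the elements in the order given by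
the list `o`. -/
def greedyErasure {m k : ℕ} (S : Fin k → Finset (Fin m)) (o : List (Fin m)) :
    Finset (Fin m) :=
  greedyAux S o ∅ ∅

/-- `V` is a hitting set for `{S_1, …, S_k}`. -/
def IsHittingSet {m k : ℕ} (S : Fin k → Finset (Fin m)) (V : Finset (Fin m)) : Prop :=
  ∀ j : Fin k, (V ∩ S j).Nonempty

lemma greedyAux_mono {m k : ℕ} (S : Fin k → Finset (Fin m)) :
    ∀ (l : List (Fin m)) (R E : Finset (Fin m)), E ⊆ greedyAux S l R E
  | [], R, E => by simp [greedyAux]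
  | v :: rest, R, E => by
    rw [greedyAux]
    split_ifs with h
    · exact (Finset.subset_insert v E).trans (greedyAux_mono S rest R (insert v E))
    · exact greedyAux_mono S rest (insert v R) E

lemma greedyAux_subset {m k : ℕ} (S : Fin k → Finset (Fin m)) :
    ∀ (l : List (Fin m)) (R E : Finset (Fin m)), greedyAux S l R E ⊆ E ∪ l.toFinset
  | [], R, E => by simp [greedyAux]
  | v :: rest, R, E => by
    rw [greedyAux]
    split_ifs with h
    · refine (greedyAux_subset S rest R (insert v E)).trans ?_
      intro x hx
      simp only [Finset.mem_union, Finset.mem_insert, List.toFinset_cons,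
        List.mem_toFinset] at hx ⊢
      tauto
    · refine (greedyAux_subset S rest (insert v R) E).trans ?_
      intro x hx
      simp only [Finset.mem_union, List.toFinset_cons, List.mem_toFinset,
        Finset.mem_insert] at hx ⊢
      tauto

lemma greedyAux_hits {m k : ℕ} (S : Fin k → Finset (Fin m)) (j : Fin k) :
    ∀ (l : List (Fin m)) (R E : Finset (Fin m)),
      S j ⊆ R ∪ E ∪ l.toFinset → (∃ v ∈ S j, v ∈ l ∨ v ∈ E) →
      (S j ∩ greedyAux S l R E).Nonempty
  | [], R, E, hsub, ⟨v, hv, hve⟩ => by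
    simp only [List.not_mem_nil, false_or] at hve
    exact ⟨v, Finset.mem_inter.2 ⟨hv, by simpa [greedyAux] using hve⟩⟩
  | w :: rest, R, E, hsub, ⟨v, hv, hve⟩ => by
    rw [greedyAux]
    split_ifs with h
    · refine greedyAux_hits S j rest R (insert w E) ?_ ?_
      · intro x hx
        have := hsub hx
        simp only [Finset.mem_union, List.toFinset_cons, List.mem_toFinset,
          Finset.mem_insert] at this ⊢
        tauto
      · refine ⟨v, hv, ?_⟩
        simp only [List.mem_cons] at hve
        rcases hve with (rfl | hvr) | hvE
        · exact Or.inr (Finset.mem_insert_self _ _)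
        · exact Or.inl hvr
        · exact Or.inr (Finset.mem_insert_of_mem hvE)
    · push_neg at h
      have hnot : ¬ S j ⊆ insert w R := h j
      obtain ⟨x, hxS, hxR⟩ := Finset.not_subset.1 hnot
      refine greedyAux_hits S j rest (insert w R) E ?_ ⟨x, hxS, ?_⟩
      · intro y hy
        have := hsub hy
        simp only [Finset.mem_union, List.toFinset_cons, List.mem_toFinset,
          Finset.mem_insert] at this ⊢
        tauto
      · have := hsub hxS
        simp only [Finset.mem_union, List.toFinset_cons, List.mem_toFinset,
          Finset.mem_insert] at this hxR
        push_neg at hxR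
        tauto

lemma greedyAux_skip {m k : ℕ} (S : Fin k → Finset (Fin m)) (V : Finset (Fin m))
    (hV : IsHittingSet S V) :
    ∀ (l1 l2 : List (Fin m)) (R E : Finset (Fin m)),
      (∀ v ∈ l1, v ∉ V) → (∀ v ∈ R, v ∉ V) →
      greedyAux S (l1 ++ l2) R E = greedyAux S l2 (R ∪ l1.toFinset) E
  | [], l2, R, E, _, _ => by simp
  | w :: rest, l2, R, E, h1, hR => by
    rw [List.cons_append, greedyAux]
    have hcond : ¬ ∃ j : Fin k, S j ⊆ insert w R := by
      rintro ⟨j, hj⟩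
      obtain ⟨x, hx⟩ := hV j
      rw [Finset.mem_inter] at hx
      have := hj hx.2
      rcases Finset.mem_insert.1 this with rfl | hxR
      · exact h1 x List.mem_cons_self hx.1
      · exact hR x hxR hx.1
    rw [if_neg hcond,
      greedyAux_skip S V hV rest l2 (insert w R) E
        (fun v hv => h1 v (List.mem_cons_of_mem _ hv))
        (fun v hv => by
          rcases Finset.mem_insert.1 hv with rfl | hvR
          · exact h1 v List.mem_cons_self
          · exact hR v hvR)]
    congr 1
    ext x
    simp only [Finset.mem_union, Finset.mem_insert, List.toFinset_cons, List.mem_toFinset]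
    tauto

lemma greedyErasure_isHittingSet {m k : ℕ} (S : Fin k → Finset (Fin m))
    (hSne : ∀ j, (S j).Nonempty) (o : List (Fin m)) (ho : ∀ v : Fin m, v ∈ o) :
    IsHittingSet S (greedyErasure S o) := by
  intro j
  obtain ⟨v, hv⟩ := hSne j
  have h := greedyAux_hits S j o ∅ ∅ (by intro x hx; simp [ho x]) ⟨v, hv, Or.inl (ho v)⟩
  rwa [Finset.inter_comm] at h

/-- greedy erasure matches hitting sets: for any hitting set `V` there is
an ordering of the universe (one visiting all of `U \ V` before any element of `V`)
whose greedy erasure set is contained in `V`, hence has cardinality at most `|V|`.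
Combined with the fact that every greedy erasure set is a hitting set, the minimum of
`|E_π|` over all orderings equals the minimum cardinality of a hitting set. -/
theorem greedyErasure_matches_hittingSet {m k : ℕ} (hm : 1 ≤ m) (hk : 1 ≤ k)
    (S : Fin k → Finset (Fin m))
    (hSne : ∀ j, (S j).Nonempty)
    (hScover : ∀ v : Fin m, ∃ j, v ∈ S j)
    (V : Finset (Fin m)) (hV : IsHittingSet S V) :
    (∃ o : List (Fin m), o.Nodup ∧ (∀ v : Fin m, v ∈ o) ∧
      greedyErasure S o ⊆ V ∧ (greedyErasure S o).card ≤ V.card) ∧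
    sInf {c : ℕ | ∃ o : List (Fin m), o.Nodup ∧ (∀ v : Fin m, v ∈ o) ∧
          (greedyErasure S o).card = c}
      = sInf {c : ℕ | ∃ W : Finset (Fin m), IsHittingSet S W ∧ W.card = c} := by
  -- A good ordering for a given hitting set W: complement first, then W.
  have key : ∀ W : Finset (Fin m), IsHittingSet S W →
      ∃ o : List (Fin m), o.Nodup ∧ (∀ v : Fin m, v ∈ o) ∧
        greedyErasure S o ⊆ W ∧ (greedyErasure S o).card ≤ W.card := by
    intro W hW
    refine ⟨Wᶜ.toList ++ W.toList, ?_, ?_, ?_, ?_⟩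
    · refine List.Nodup.append (Finset.nodup_toList _) (Finset.nodup_toList _) ?_
      intro x hx hx'
      rw [Finset.mem_toList, Finset.mem_compl] at hx
      rw [Finset.mem_toList] at hx'
      exact hx hx'
    · intro v
      by_cases hv : v ∈ W
      · exact List.mem_append_right _ (Finset.mem_toList.2 hv)
      · exact List.mem_append_left _ (Finset.mem_toList.2 (Finset.mem_compl.2 hv))
    · have hsub : greedyErasure S (Wᶜ.toList ++ W.toList) ⊆ W := by
        unfold greedyErasure
        rw [greedyAux_skip S W hW _ _ ∅ ∅
          (fun v hv => Finset.mem_compl.1 (Finset.mem_toList.1 hv))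
          (fun v hv => absurd hv (Finset.notMem_empty v))]
        refine (greedyAux_subset S _ _ _).trans ?_
        simp
      exact hsub
    · unfold greedyErasure
      rw [greedyAux_skip S W hW _ _ ∅ ∅
        (fun v hv => Finset.mem_compl.1 (Finset.mem_toList.1 hv))
        (fun v hv => absurd hv (Finset.notMem_empty v))]
      refine Finset.card_le_card ?_
      refine (greedyAux_subset S _ _ _).trans ?_
      simp
  refine ⟨key V hV, ?_⟩
  set A : Set ℕ := {c : ℕ | ∃ o : List (Fin m), o.Nodup ∧ (∀ v : Fin m, v ∈ o) ∧
          (greedyErasure S o).card = c} with hA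
  set B : Set ℕ := {c : ℕ | ∃ W : Finset (Fin m), IsHittingSet S W ∧ W.card = c} with hB
  have hBne : B.Nonempty := ⟨V.card, V, hV, rfl⟩
  have hAne : A.Nonempty := by
    obtain ⟨o, h1, h2, _, _⟩ := key V hV
    exact ⟨(greedyErasure S o).card, o, h1, h2, rfl⟩
  apply le_antisymm
  · -- sInf A ≤ sInf B
    obtain ⟨W, hW, hWc⟩ := Nat.sInf_mem hBne
    obtain ⟨o, h1, h2, _, h4⟩ := key W hW
    calc sInf A ≤ (greedyErasure S o).card := Nat.sInf_le ⟨o, h1, h2, rfl⟩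
      _ ≤ W.card := h4
      _ = sInf B := hWc
  · obtain ⟨o, h1, h2, h3⟩ := Nat.sInf_mem hAne
    have hhit := greedyErasure_isHittingSet S hSne o h2
    calc sInf B ≤ (greedyErasure S o).card := Nat.sInf_le ⟨_, hhit, rfl⟩
      _ = sInf A := h3


end GenotypeHiding
end
end
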